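/- arXiv:2109.12782 — 4 statements merged into one kernel-verified Lean document; each statement's English description precedes it below -/
import Mathlib

section
/- Let k, c, e and s be integers with k ≥ 2 and e, s ≥ 1, and let p be a prime number not dividing e. Then 𝒩_{k,c,e}(p^s) = p^{(k−1)(s−1)} · 𝒩_{k,c,e}(p). -/
lemma add_pow_of_sq_eq_zero {R : Type*} [CommRing R] (x a : R) (ha : a * a = 0) (m : ℕ) :
    (x + a) ^ (m + 1) = x ^ (m + 1) + (m + 1) * x ^ m * a := by
  induction m with
  | zero => ring
  | succ m ih =>
    have h2 : (x + a) ^ (m + 1 + 1) = (x + a) ^ (m + 1) * (x + a) := by ring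
    rw [h2, ih]
    push_cast
    linear_combination ((m : R) + 1) * x ^ m * ha

lemma nat_card_eq_sum_fibers {A B : Type*} [Finite A] [Fintype B] (φ : A → B) :
    Nat.card A = ∑ y : B, Nat.card {x // φ x = y} := by
  classical
  cases nonempty_fintype A
  rw [← Nat.card_congr (Equiv.sigmaFiberEquiv φ), Nat.card_eq_fintype_card,
    Fintype.card_sigma]
  simp [Nat.card_eq_fintype_card]

lemma zmod_isUnit_iff (p t : ℕ) (hp : p.Prime) (ht : t ≠ 0) (x : ZMod (p ^ t)) :
    IsUnit x ↔ ZMod.castHom (dvd_pow_self p ht) (ZMod p) x ≠ 0 := by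
  haveI : NeZero (p ^ t) := ⟨pow_ne_zero t hp.pos.ne'⟩
  rw [ZMod.castHom_apply, ← ZMod.natCast_val, Ne, ZMod.natCast_eq_zero_iff]
  conv_lhs => rw [← ZMod.natCast_zmod_val x]
  rw [ZMod.isUnit_iff_coprime, Nat.coprime_pow_right_iff ht.bot_lt, Nat.coprime_comm,
    hp.coprime_iff_not_dvd]

lemma zmod_ker_lemma (p s : ℕ) (hp : p.Prime) (z : ZMod (p ^ (s + 1)))
    (hz : ZMod.castHom (pow_dvd_pow p (Nat.le_succ s)) (ZMod (p ^ s)) z = 0) :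
    ∃ w : ZMod (p ^ (s + 1)), z = (p ^ s : ℕ) * w := by
  haveI : NeZero (p ^ (s + 1)) := ⟨pow_ne_zero _ hp.pos.ne'⟩
  rw [ZMod.castHom_apply, ← ZMod.natCast_val, ZMod.natCast_eq_zero_iff] at hz
  obtain ⟨w, hw⟩ := hz
  exact ⟨(w : ZMod (p ^ (s + 1))), by rw [← ZMod.natCast_zmod_val z, hw]; push_cast; ring⟩

lemma ps_mul_eq_zero_iff (p s : ℕ) (hp : p.Prime) (w : ZMod (p ^ (s + 1))) :
    ((p ^ s : ℕ) : ZMod (p ^ (s + 1))) * w = 0 ↔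
      ZMod.castHom (dvd_pow_self p (Nat.succ_ne_zero s)) (ZMod p) w = 0 := by
  haveI : NeZero (p ^ (s + 1)) := ⟨pow_ne_zero _ hp.pos.ne'⟩
  rw [ZMod.castHom_apply, ← ZMod.natCast_val, ZMod.natCast_eq_zero_iff]
  conv_lhs => rw [← ZMod.natCast_zmod_val w, ← Nat.cast_mul,
    ZMod.natCast_eq_zero_iff]
  have hv : ∀ v : ℕ, (p ^ (s + 1) ∣ p ^ s * v ↔ p ∣ v) := fun v => by
    rw [pow_succ]; exact Nat.mul_dvd_mul_iff_left (pow_pos hp.pos s)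
  exact hv w.val

lemma card_linear_solutions (p : ℕ) (hp : p.Prime) (k' : ℕ) (b : Fin (k' + 1) → ZMod p)
    (hb : b 0 ≠ 0) (d : ZMod p) :
    Nat.card {t : Fin (k' + 1) → ZMod p // ∑ i, b i * t i = d} = p ^ k' := by
  haveI : Fact p.Prime := ⟨hp⟩
  have key : ∀ t' : Fin k' → ZMod p,
      ∑ i, b i * (Fin.cons ((b 0)⁻¹ * (d - ∑ j, b j.succ * t' j)) t' : Fin (k' + 1) → ZMod p) i = d := by
    intro t'
    rw [Fin.sum_univ_succ]
    simp only [Fin.cons_succ, Fin.cons_zero]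
    rw [← mul_assoc, mul_inv_cancel₀ hb, one_mul]
    ring
  have hbij : Function.Bijective
      (fun t' : Fin k' → ZMod p =>
        (⟨Fin.cons ((b 0)⁻¹ * (d - ∑ j, b j.succ * t' j)) t', key t'⟩ :
          {t : Fin (k' + 1) → ZMod p // ∑ i, b i * t i = d})) := by
    constructor
    · intro a b' hab
      have := congrArg (fun z => Fin.tail z.1) hab
      simpa [Fin.tail_cons] using this
    · rintro ⟨t, ht⟩
      refine ⟨Fin.tail t, ?_⟩
      have h0 : t 0 = (b 0)⁻¹ * (d - ∑ j, b j.succ * Fin.tail t j) := by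
        rw [Fin.sum_univ_succ] at ht
        field_simp
        simp only [Fin.tail]
        linear_combination ht
      ext1
      simp only
      rw [← h0, Fin.cons_self_tail]
  rw [← Nat.card_eq_of_bijective _ hbij]
  simp [Nat.card_eq_fintype_card, ZMod.card]

/-- `excCount k c e n` is 𝒩_{k,c,e}(n): the number of `k`-tuples of exceptional
units of `ℤ_n` (i.e. elements `u` with both `u` and `1 - u` units) whose `e`-th
powers sum to `c` modulo `n`. -/
noncomputable def excCount (k : ℕ) (c : ℤ) (e : ℕ) (n : ℕ) : ℕ :=
  Nat.card {x : Fin k → ZMod n //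
    (∀ i, IsUnit (x i) ∧ IsUnit (1 - x i)) ∧ ∑ i, (x i) ^ e = (c : ZMod n)}

lemma excCount_step (k' : ℕ) (c : ℤ) (m : ℕ) (p : ℕ) (hp : p.Prime)
    (hpe : ¬ p ∣ (m + 1)) (s : ℕ) (hs : 1 ≤ s) :
    excCount (k' + 1) c (m + 1) (p ^ (s + 1)) =
      p ^ k' * excCount (k' + 1) c (m + 1) (p ^ s) := by
  classical
  haveI : Fact p.Prime := ⟨hp⟩
  haveI : NeZero p := ⟨hp.pos.ne'⟩
  haveI : NeZero (p ^ (s + 1)) := ⟨pow_ne_zero _ hp.pos.ne'⟩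
  haveI : NeZero (p ^ s) := ⟨pow_ne_zero _ hp.pos.ne'⟩
  have hs0 : s ≠ 0 := by omega
  set r : ZMod (p ^ (s + 1)) →+* ZMod (p ^ s) :=
    ZMod.castHom (pow_dvd_pow p (Nat.le_succ s)) _ with hr
  set π : ZMod (p ^ (s + 1)) →+* ZMod p :=
    ZMod.castHom (dvd_pow_self p (Nat.succ_ne_zero s)) _ with hπ
  set π' : ZMod (p ^ s) →+* ZMod p := ZMod.castHom (dvd_pow_self p hs0) _ with hπ'
  have hcomp : ∀ z, π' (r z) = π z := fun z => by
    rw [hr, hπ', ← RingHom.comp_apply, ZMod.castHom_comp]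
  have hunitN : ∀ z : ZMod (p ^ (s + 1)), IsUnit z ↔ π z ≠ 0 :=
    zmod_isUnit_iff p (s + 1) hp (Nat.succ_ne_zero s)
  have hunitM : ∀ z : ZMod (p ^ s), IsUnit z ↔ π' z ≠ 0 := zmod_isUnit_iff p s hp hs0
  set P : ZMod (p ^ (s + 1)) := ((p ^ s : ℕ) : ZMod (p ^ (s + 1))) with hP
  have hPP : P * P = 0 := by
    rw [hP, ← Nat.cast_mul, ZMod.natCast_eq_zero_iff, ← pow_add]
    exact pow_dvd_pow p (by omega)
  have hPzero : ∀ w, P * w = 0 ↔ π w = 0 := fun w => ps_mul_eq_zero_iff p s hp w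
  have hπP : π P = 0 := by
    rw [hP, hπ, map_natCast, ZMod.natCast_eq_zero_iff]
    exact dvd_pow_self p hs0
  have hrP : r P = 0 := by rw [hP, hr, map_natCast, ZMod.natCast_self]
  have hPw : ∀ w : ZMod (p ^ (s + 1)),
      P * w = P * (((π w).val : ℕ) : ZMod (p ^ (s + 1))) := by
    intro w
    have h0 : π (w - (((π w).val : ℕ) : ZMod (p ^ (s + 1)))) = 0 := by
      rw [map_sub, map_natCast, ZMod.natCast_zmod_val, sub_self]
    have h1 := (hPzero _).mpr h0
    rw [mul_sub] at h1
    exact sub_eq_zero.mp h1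
  -- the solution map
  set φ : {x : Fin (k' + 1) → ZMod (p ^ (s + 1)) //
        (∀ i, IsUnit (x i) ∧ IsUnit (1 - x i)) ∧
          ∑ i, (x i) ^ (m + 1) = (c : ZMod (p ^ (s + 1)))} →
      {x : Fin (k' + 1) → ZMod (p ^ s) //
        (∀ i, IsUnit (x i) ∧ IsUnit (1 - x i)) ∧
          ∑ i, (x i) ^ (m + 1) = (c : ZMod (p ^ s))} :=
    fun x => ⟨fun i => r (x.1 i), by
      constructor
      · intro i
        constructor
        · rw [hunitM, hcomp]
          exact (hunitN _).mp (x.2.1 i).1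
        · rw [hunitM]
          have h1 : (1 : ZMod (p ^ s)) - r (x.1 i) = r (1 - x.1 i) := by
            rw [map_sub, map_one]
          rw [h1, hcomp]
          exact (hunitN _).mp (x.2.1 i).2
      · calc ∑ i, (r (x.1 i)) ^ (m + 1) = r (∑ i, x.1 i ^ (m + 1)) := by
              rw [map_sum]; simp only [map_pow]
          _ = r ((c : ZMod (p ^ (s + 1)))) := by rw [x.2.2]
          _ = (c : ZMod (p ^ s)) := map_intCast r c⟩ with hφ
  have fiber_card : ∀ y, Nat.card {x // φ x = y} = p ^ k' := by
    intro y
    set Y : Fin (k' + 1) → ZMod (p ^ (s + 1)) :=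
      fun i => (((y.1 i).val : ℕ) : ZMod (p ^ (s + 1))) with hYdef
    have hrY : ∀ i, r (Y i) = y.1 i := fun i => by
      rw [hYdef]; simp only; rw [map_natCast, ZMod.natCast_zmod_val]
    have hπY : ∀ i, π (Y i) = π' (y.1 i) := fun i => by rw [← hcomp, hrY]
    have hy1 : ∀ i, π' (y.1 i) ≠ 0 := fun i => (hunitM _).mp (y.2.1 i).1
    have hy2 : ∀ i, π' (1 - y.1 i) ≠ 0 := fun i => (hunitM _).mp (y.2.1 i).2
    have hyc : r (∑ i, Y i ^ (m + 1) - (c : ZMod (p ^ (s + 1)))) = 0 := by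
      rw [map_sub, map_sum]
      simp only [map_pow, hrY, map_intCast]
      rw [y.2.2, sub_self]
    obtain ⟨w, hw⟩ := zmod_ker_lemma p s hp _ hyc
    set b : Fin (k' + 1) → ZMod p := fun i => ((m + 1 : ℕ) : ZMod p) * π (Y i) ^ m
      with hbdef
    set d : ZMod p := -π w with hddef
    have hb0 : b 0 ≠ 0 := by
      apply mul_ne_zero
      · rw [Ne, ZMod.natCast_eq_zero_iff]; exact hpe
      · exact pow_ne_zero _ (by rw [hπY]; exact hy1 0)
    have hexp : ∀ t : Fin (k' + 1) → ZMod p,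
        (∑ i, (Y i + P * (((t i).val : ℕ) : ZMod (p ^ (s + 1)))) ^ (m + 1)
          = (c : ZMod (p ^ (s + 1)))) ↔ ∑ i, b i * t i = d := by
      intro t
      have expand : ∀ i, (Y i + P * (((t i).val : ℕ) : ZMod (p ^ (s + 1)))) ^ (m + 1)
          = Y i ^ (m + 1) + P * (((m + 1 : ℕ) : ZMod (p ^ (s + 1))) * Y i ^ m *
              (((t i).val : ℕ) : ZMod (p ^ (s + 1)))) := by
        intro i
        rw [add_pow_of_sq_eq_zero _ _
          (by rw [mul_mul_mul_comm, hPP, zero_mul]) m]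
        push_cast
        ring
      rw [Finset.sum_congr rfl (fun i _ => expand i), Finset.sum_add_distrib,
        ← Finset.mul_sum]
      have hsY : ∑ i, Y i ^ (m + 1) = (c : ZMod (p ^ (s + 1))) + P * w := by
        rw [← hw]; ring
      rw [hsY, add_assoc, add_eq_left, ← mul_add, hPzero, map_add, map_sum]
      simp only [map_mul, map_pow, map_natCast, ZMod.natCast_zmod_val]
      rw [add_comm, add_eq_zero_iff_eq_neg]
    -- forward bijection from linear solutions to the fiber
    have hmem : ∀ t : {t : Fin (k' + 1) → ZMod p // ∑ i, b i * t i = d},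
        ((∀ i, IsUnit ((fun i => Y i + P * (((t.1 i).val : ℕ) : ZMod (p ^ (s + 1)))) i) ∧
            IsUnit (1 - (fun i => Y i + P * (((t.1 i).val : ℕ) : ZMod (p ^ (s + 1)))) i)) ∧
          ∑ i, ((fun i => Y i + P * (((t.1 i).val : ℕ) : ZMod (p ^ (s + 1)))) i) ^ (m + 1)
            = (c : ZMod (p ^ (s + 1)))) := by
      intro t
      constructor
      · intro i
        constructor
        · rw [hunitN, map_add, map_mul, hπP, zero_mul, add_zero, hπY]
          exact hy1 i
        · rw [hunitN, map_sub, map_one, map_add, map_mul, hπP, zero_mul, add_zero, hπY,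
            ← map_one π', ← map_sub]
          exact hy2 i
      · exact (hexp t.1).mpr t.2
    set Ψ : {t : Fin (k' + 1) → ZMod p // ∑ i, b i * t i = d} → {x // φ x = y} :=
      fun t => ⟨⟨fun i => Y i + P * (((t.1 i).val : ℕ) : ZMod (p ^ (s + 1))), hmem t⟩, by
        apply Subtype.ext
        funext i
        show r (Y i + P * _) = y.1 i
        rw [map_add, map_mul, hrP, zero_mul, add_zero, hrY]⟩ with hΨ
    have hΨbij : Function.Bijective Ψ := by
      constructor
      · intro t1 t2 h12
        have h := congrArg (fun z => z.1.1) h12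
        simp only [hΨ] at h
        apply Subtype.ext
        funext i
        have hi := congrFun h i
        have hi2 : P * (((t1.1 i).val : ℕ) : ZMod (p ^ (s + 1)))
            = P * (((t2.1 i).val : ℕ) : ZMod (p ^ (s + 1))) := by
          exact add_left_cancel hi
        have hcast : ∀ v : ℕ, P * ((v : ℕ) : ZMod (p ^ (s + 1)))
            = ((p ^ s * v : ℕ) : ZMod (p ^ (s + 1))) := by
          intro v; rw [hP]; push_cast; ring
        rw [hcast, hcast] at hi2
        have hval := congrArg ZMod.val hi2
        have hlt : ∀ u : ZMod p, p ^ s * u.val < p ^ (s + 1) := by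
          intro u
          rw [pow_succ]
          exact mul_lt_mul_of_pos_left u.val_lt (pow_pos hp.pos s)
        rw [ZMod.val_cast_of_lt (hlt _), ZMod.val_cast_of_lt (hlt _)] at hval
        have := Nat.eq_of_mul_eq_mul_left (pow_pos hp.pos s) hval
        calc t1.1 i = ((t1.1 i).val : ZMod p) := (ZMod.natCast_zmod_val _).symm
          _ = ((t2.1 i).val : ZMod p) := by rw [this]
          _ = t2.1 i := ZMod.natCast_zmod_val _
      · rintro ⟨x, hx⟩
        have hker : ∀ i, r (x.1 i - Y i) = 0 := by
          intro i
          rw [map_sub, hrY]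
          have : r (x.1 i) = y.1 i := congrFun (congrArg Subtype.val hx) i
          rw [this, sub_self]
        choose W hW using fun i => zmod_ker_lemma p s hp _ (hker i)
        set t : Fin (k' + 1) → ZMod p := fun i => π (W i) with htdef
        have hxi : ∀ i, x.1 i = Y i + P * (((t i).val : ℕ) : ZMod (p ^ (s + 1))) := by
          intro i
          have h1 : x.1 i - Y i = P * W i := hW i
          rw [htdef]
          simp only
          rw [← hPw, ← h1]
          ring
        have hxfun : x.1 = fun i => Y i + P * (((t i).val : ℕ) : ZMod (p ^ (s + 1))) :=
          funext hxi
        have hsum := x.2.2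
        rw [hxfun] at hsum
        refine ⟨⟨t, (hexp t).mp hsum⟩, ?_⟩
        apply Subtype.ext
        apply Subtype.ext
        exact hxfun.symm
    rw [← Nat.card_eq_of_bijective Ψ hΨbij]
    exact card_linear_solutions p hp k' b hb0 d
  -- assemble
  haveI : Fintype {x : Fin (k' + 1) → ZMod (p ^ s) //
      (∀ i, IsUnit (x i) ∧ IsUnit (1 - x i)) ∧
        ∑ i, (x i) ^ (m + 1) = (c : ZMod (p ^ s))} := Fintype.ofFinite _
  show Nat.card _ = p ^ k' * Nat.card _
  rw [nat_card_eq_sum_fibers φ]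
  rw [Finset.sum_congr rfl (fun y _ => fiber_card y), Finset.sum_const,
    Finset.card_univ, smul_eq_mul, Nat.card_eq_fintype_card, mul_comm]

theorem excCount_prime_pow (k : ℕ) (hk : 2 ≤ k) (c : ℤ) (e : ℕ) (he : 1 ≤ e)
    (s : ℕ) (hs : 1 ≤ s) (p : ℕ) (hp : p.Prime) (hpe : ¬ p ∣ e) :
    excCount k c e (p ^ s) = p ^ ((k - 1) * (s - 1)) * excCount k c e p := by
  obtain ⟨k', rfl⟩ : ∃ k'', k = k'' + 1 := ⟨k - 1, by omega⟩
  obtain ⟨m, rfl⟩ : ∃ m, e = m + 1 := ⟨e - 1, by omega⟩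
  obtain ⟨s', rfl⟩ : ∃ s'', s = s'' + 1 := ⟨s - 1, by omega⟩
  clear hk he hs
  simp only [Nat.add_sub_cancel]
  induction s' with
  | zero => simp
  | succ n ih =>
    rw [excCount_step k' c m p hp hpe (n + 1) (by omega), ih]
    ring
end

section
/- Let n be an odd positive integer with prime factorization n = ∏_{i=1}^{l} p_i^{s_i}, and let k ≥ 2 and c be integers. Then 𝒩_{k,c,2}(n) = ∏_{i=1}^{l} p_i^{(k−1)(s_i−1)} · 𝒩_{k,c,2}(p_i). -/
lemma isUnit_cast_iff {p t : ℕ} (hp : p.Prime) (ht : t ≠ 0) (x : ZMod (p^t)) :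
    IsUnit (ZMod.castHom (dvd_pow_self p ht) (ZMod p) x) ↔ IsUnit x := by
  have : NeZero (p^t) := ⟨pow_ne_zero _ hp.pos.ne'⟩
  obtain ⟨v, rfl⟩ : ∃ v : ℕ, (v : ZMod (p^t)) = x := ⟨x.val, ZMod.natCast_rightInverse x⟩
  rw [map_natCast, ZMod.isUnit_iff_coprime, ZMod.isUnit_iff_coprime,
    Nat.coprime_pow_right_iff (Nat.pos_of_ne_zero ht)]

section step
variable {p : ℕ} (hp : p.Prime) {s : ℕ} (hs : 1 ≤ s)

-- basic setup lemmas
lemma kernel_dvd (hp : p.Prime) {s : ℕ} (v : ZMod (p^(s+1)))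
    (hv : ZMod.castHom (pow_dvd_pow p s.le_succ) (ZMod (p^s)) v = 0) : p^s ∣ v.val := by
  have : NeZero (p^(s+1)) := ⟨pow_ne_zero _ hp.pos.ne'⟩
  obtain ⟨w, rfl⟩ : ∃ w : ℕ, (w : ZMod (p^(s+1))) = v := ⟨v.val, ZMod.natCast_rightInverse v⟩
  rw [map_natCast, ZMod.natCast_eq_zero_iff] at hv
  rw [ZMod.val_natCast]
  exact (Nat.dvd_mod_iff (pow_dvd_pow p s.le_succ)).mpr hv

-- (G): M * cast(val(t mod p)) = cast(M*t) in ZMod N, where M = p^s, N = p^(s+1)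
lemma lemG (hp : p.Prime) (s : ℕ) (t : ℕ) :
    ((p^s : ℕ) : ZMod (p^(s+1))) * ((((t : ZMod p)).val : ℕ) : ZMod (p^(s+1)))
      = ((p^s * t : ℕ) : ZMod (p^(s+1))) := by
  rw [ZMod.val_natCast, ← Nat.cast_mul, ZMod.natCast_eq_natCast_iff]
  have : p ^ (s+1) = p^s * p := by ring
  rw [this]
  exact (Nat.mod_modEq t p).mul_left' _

-- (E): M * a = M * b ↔ π a = π b
lemma lemE (hp : p.Prime) (s : ℕ) (a b : ZMod (p^(s+1))) :
    ((p^s : ℕ) : ZMod (p^(s+1))) * a = ((p^s : ℕ) : ZMod (p^(s+1))) * b ↔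
      ZMod.castHom (dvd_pow_self p (Nat.succ_ne_zero s)) (ZMod p) a =
      ZMod.castHom (dvd_pow_self p (Nat.succ_ne_zero s)) (ZMod p) b := by
  have : NeZero (p^(s+1)) := ⟨pow_ne_zero _ hp.pos.ne'⟩
  obtain ⟨v, rfl⟩ : ∃ v : ℕ, (v : ZMod (p^(s+1))) = a := ⟨a.val, ZMod.natCast_rightInverse a⟩
  obtain ⟨w, rfl⟩ : ∃ w : ℕ, (w : ZMod (p^(s+1))) = b := ⟨b.val, ZMod.natCast_rightInverse b⟩
  rw [map_natCast, map_natCast, ← Nat.cast_mul, ← Nat.cast_mul,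
    ZMod.natCast_eq_natCast_iff, ZMod.natCast_eq_natCast_iff]
  have hN : p ^ (s+1) = p^s * p := by ring
  rw [hN]
  exact Nat.ModEq.mul_left_cancel_iff' (pow_ne_zero _ hp.pos.ne')

def prodEqEquiv' {α β : Type*} (g : β → α) : {w : α × β // w.1 = g w.2} ≃ β where
  toFun w := w.1.2
  invFun b := ⟨(g b, b), rfl⟩
  left_inv := fun ⟨⟨t, w⟩, h⟩ => by simp only at h; subst h; rfl
  right_inv := fun b => rfl

lemma card_linear_solutions_s4 {p : ℕ} [Fact p.Prime] {k : ℕ} (a : Fin k → ZMod p) (b : ZMod p)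
    (i₀ : Fin k) (ha : a i₀ ≠ 0) :
    Nat.card {z : Fin k → ZMod p // ∑ i, a i * z i = b} = p ^ (k - 1) := by
  classical
  have hs : ∀ z : Fin k → ZMod p, ∑ i, a i * z i
      = a i₀ * z i₀ + ∑ j : {j : Fin k // j ≠ i₀}, a j.1 * z j.1 := by
    intro z
    rw [Fintype.sum_eq_add_sum_compl i₀ (fun i => a i * z i)]
    congr 1
    exact Finset.sum_subtype ({i₀}ᶜ) (p := fun j => j ≠ i₀) (by simp) (fun i => a i * z i)
  have e1 : {z : Fin k → ZMod p // ∑ i, a i * z i = b} ≃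
      {w : ZMod p × ({j : Fin k // j ≠ i₀} → ZMod p) //
        w.1 = (a i₀)⁻¹ * (b - ∑ j : {j : Fin k // j ≠ i₀}, a j.1 * w.2 j)} := by
    refine (Equiv.funSplitAt i₀ (ZMod p)).subtypeEquiv (fun z => ?_)
    simp only [Equiv.funSplitAt, Equiv.piSplitAt, Equiv.coe_fn_mk]
    rw [eq_inv_mul_iff_mul_eq₀ ha, eq_sub_iff_add_eq, hs z]
  rw [Nat.card_congr (e1.trans (prodEqEquiv'
    (fun w2 : {j : Fin k // j ≠ i₀} → ZMod p =>
      (a i₀)⁻¹ * (b - ∑ j : {j : Fin k // j ≠ i₀}, a j.1 * w2 j)))),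
    Nat.card_eq_fintype_card, Fintype.card_fun, ZMod.card]
  congr 1
  rw [Fintype.card_subtype_compl, Fintype.card_subtype_eq, Fintype.card_fin]

lemma excCount_pow_succ {p : ℕ} (hp : p.Prime) (hp2 : p ≠ 2) (s : ℕ) (hs : 1 ≤ s)
    (k : ℕ) (hk : 0 < k) (c : ℤ) :
    excCount k c 2 (p ^ (s+1)) = p ^ (k - 1) * excCount k c 2 (p ^ s) := by
  classical
  have hFact : Fact p.Prime := ⟨hp⟩
  have hNz1 : NeZero (p^(s+1)) := ⟨pow_ne_zero _ hp.pos.ne'⟩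
  have hNz2 : NeZero (p^s) := ⟨pow_ne_zero _ hp.pos.ne'⟩
  have hMN : (p^s : ℕ) ∣ p^(s+1) := pow_dvd_pow p s.le_succ
  have hpN : p ∣ p^(s+1) := dvd_pow_self p (Nat.succ_ne_zero s)
  have hpM : p ∣ p^s := dvd_pow_self p (Nat.one_le_iff_ne_zero.mp hs)
  set ρ := ZMod.castHom hMN (ZMod (p^s)) with hρdef
  set π := ZMod.castHom hpN (ZMod p) with hπdef
  set π' := ZMod.castHom hpM (ZMod p) with hπ'def
  have hππ : ∀ u : ZMod (p^(s+1)), π' (ρ u) = π u := fun u => by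
    rw [hπ'def, hρdef, ← RingHom.comp_apply, ZMod.castHom_comp]
  have hUnit : ∀ u : ZMod (p^(s+1)), IsUnit (ρ u) ↔ IsUnit u := by
    intro u
    constructor
    · intro h
      have h2 := h.map π'
      rw [hππ] at h2
      exact (isUnit_cast_iff hp (Nat.succ_ne_zero s) u).mp h2
    · exact fun h => h.map ρ
  -- the reduction map on solutions
  have hf : ∀ x : {x : Fin k → ZMod (p^(s+1)) //
      (∀ i, IsUnit (x i) ∧ IsUnit (1 - x i)) ∧ ∑ i, (x i) ^ 2 = (c : ZMod (p^(s+1)))},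
      (∀ i, IsUnit (ρ (x.1 i)) ∧ IsUnit (1 - ρ (x.1 i))) ∧
        ∑ i, (ρ (x.1 i)) ^ 2 = (c : ZMod (p^s)) := by
    rintro ⟨x, ⟨hu, hsum⟩⟩
    refine ⟨fun i => ⟨(hu i).1.map ρ, ?_⟩, ?_⟩
    · have := (hu i).2.map ρ
      rwa [map_sub, map_one] at this
    · show ∑ i, (ρ (x i))^2 = (c : ZMod (p^s))
      rw [← map_intCast ρ c, ← hsum, map_sum]
      simp [map_pow]
  set f : {x : Fin k → ZMod (p^(s+1)) //
      (∀ i, IsUnit (x i) ∧ IsUnit (1 - x i)) ∧ ∑ i, (x i) ^ 2 = (c : ZMod (p^(s+1)))} →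
      {y : Fin k → ZMod (p^s) //
      (∀ i, IsUnit (y i) ∧ IsUnit (1 - y i)) ∧ ∑ i, (y i) ^ 2 = (c : ZMod (p^s))} :=
    fun x => ⟨fun i => ρ (x.1 i), by
      have := hf x
      simpa using this⟩ with hfdef
  have hfib : ∀ y, Nat.card {x // f x = y} = p ^ (k - 1) := by
    intro y
    haveI : NeZero p := ⟨hp.pos.ne'⟩
    set Mc : ZMod (p^(s+1)) := ((p^s : ℕ) : ZMod (p^(s+1))) with hMc
    set yh : Fin k → ZMod (p^(s+1)) := fun i => ((y.1 i).val : ZMod (p^(s+1))) with hyh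
    have hρy : ∀ i, ρ (yh i) = y.1 i := fun i => by
      rw [hyh]; simp only [map_natCast]; exact ZMod.natCast_rightInverse _
    have hπy : ∀ i, π (yh i) = π' (y.1 i) := fun i => by rw [← hππ, hρy]
    have haU : ∀ i, IsUnit (π' (y.1 i)) :=
      fun i => (isUnit_cast_iff hp (Nat.one_le_iff_ne_zero.mp hs) (y.1 i)).mpr (y.2.1 i).1
    have h2 : IsUnit (2 : ZMod p) := by
      rw [show (2 : ZMod p) = ((2 : ℕ) : ZMod p) by norm_num, ZMod.isUnit_iff_coprime]
      exact Nat.coprime_comm.mp (hp.coprime_iff_not_dvd.mpr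
        (fun hdvd => hp2 ((Nat.prime_dvd_prime_iff_eq hp Nat.prime_two).mp hdvd)))
    have hG' : ∀ w : ZMod p, Mc * ((w.val : ℕ) : ZMod (p^(s+1)))
        = ((p^s * w.val : ℕ) : ZMod (p^(s+1))) := by
      intro w
      have h := lemG hp s w.val
      rwa [ZMod.natCast_rightInverse w] at h
    have hE' : ∀ u v : ZMod (p^(s+1)), Mc * u = Mc * v ↔ π u = π v := by
      intro u v
      rw [hMc]
      exact lemE hp s u v
    have hπG : ∀ w : ZMod p, π ((w.val : ℕ) : ZMod (p^(s+1))) = w := by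
      intro w; rw [map_natCast]; exact ZMod.natCast_rightInverse w
    set d : ZMod (p^(s+1)) := (c : ZMod (p^(s+1))) - ∑ i, yh i ^ 2 with hd
    have hρd : ρ d = 0 := by
      rw [hd, map_sub, map_intCast, map_sum]
      simp only [map_pow]
      simp_rw [hρy]
      rw [y.2.2, sub_self]
    have hdvd : (p^s : ℕ) ∣ d.val := kernel_dvd hp d hρd
    set b₀ : ZMod p := ((d.val / p^s : ℕ) : ZMod p) with hb₀
    have hdb : Mc * ((b₀.val : ℕ) : ZMod (p^(s+1))) = d := by
      have h := lemG hp s (d.val / p^s)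
      rw [Nat.mul_div_cancel' hdvd] at h
      rw [← hb₀, ← hMc] at h
      rw [h]
      exact ZMod.natCast_rightInverse d
    have hM2 : Mc * Mc = 0 := by
      rw [hMc, ← Nat.cast_mul, ZMod.natCast_eq_zero_iff, ← pow_add]
      exact pow_dvd_pow p (by omega)
    have hcond : ∀ z : Fin k → ZMod p,
        (∑ i, (yh i + Mc * (((z i).val : ℕ) : ZMod (p^(s+1))))^2 = (c : ZMod (p^(s+1))))
          ↔ ∑ i, (2 * π' (y.1 i)) * z i = b₀ := by
      intro z
      have expand : ∑ i, (yh i + Mc * (((z i).val : ℕ) : ZMod (p^(s+1))))^2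
          = ∑ i, yh i ^ 2 + Mc * ∑ i, 2 * yh i * (((z i).val : ℕ) : ZMod (p^(s+1))) := by
        rw [Finset.mul_sum, ← Finset.sum_add_distrib]
        refine Finset.sum_congr rfl (fun i _ => ?_)
        have hr : (yh i + Mc * (((z i).val : ℕ) : ZMod (p^(s+1))))^2
            = yh i ^ 2 + Mc * (2 * yh i * (((z i).val : ℕ) : ZMod (p^(s+1))))
              + (Mc * Mc) * ((((z i).val : ℕ) : ZMod (p^(s+1))) * (((z i).val : ℕ) : ZMod (p^(s+1)))) := by
          ring
        rw [hr, hM2, zero_mul, add_zero]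
      rw [expand, show (c : ZMod (p^(s+1))) = ∑ i, yh i ^ 2 + d by rw [hd]; ring,
        add_right_inj, ← hdb, hE']
      have hπS : π (∑ i, 2 * yh i * (((z i).val : ℕ) : ZMod (p^(s+1))))
          = ∑ i, (2 * π' (y.1 i)) * z i := by
        rw [map_sum]
        refine Finset.sum_congr rfl (fun i _ => ?_)
        rw [map_mul, map_mul, hπy, hπG, map_ofNat]
      rw [hπS, hπG]
    -- the bijection from linear solutions to the fiber
    have hbij : ∃ Φ : {z : Fin k → ZMod p // ∑ i, (2 * π' (y.1 i)) * z i = b₀} →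
        {x // f x = y}, Function.Bijective Φ := by
      have hmem : ∀ z : {z : Fin k → ZMod p // ∑ i, (2 * π' (y.1 i)) * z i = b₀},
          (∀ i, IsUnit (yh i + Mc * (((z.1 i).val : ℕ) : ZMod (p^(s+1)))) ∧
            IsUnit (1 - (yh i + Mc * (((z.1 i).val : ℕ) : ZMod (p^(s+1)))))) ∧
          ∑ i, (yh i + Mc * (((z.1 i).val : ℕ) : ZMod (p^(s+1))))^2 = (c : ZMod (p^(s+1))) := by
        intro z
        have hρx : ∀ i, ρ (yh i + Mc * (((z.1 i).val : ℕ) : ZMod (p^(s+1)))) = y.1 i := by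
          intro i
          rw [map_add, map_mul, hρy, hMc, map_natCast, ZMod.natCast_self, zero_mul, add_zero]
        refine ⟨fun i => ⟨?_, ?_⟩, (hcond z.1).mpr z.2⟩
        · rw [← hUnit, hρx]; exact (y.2.1 i).1
        · rw [← hUnit, map_sub, map_one, hρx]; exact (y.2.1 i).2
      refine ⟨fun z => ⟨⟨fun i => yh i + Mc * (((z.1 i).val : ℕ) : ZMod (p^(s+1))), hmem z⟩, ?_⟩,
        ?_, ?_⟩
      · apply Subtype.ext
        apply funext
        intro i
        show ρ (yh i + Mc * (((z.1 i).val : ℕ) : ZMod (p^(s+1)))) = y.1 i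
        rw [map_add, map_mul, hρy, hMc, map_natCast, ZMod.natCast_self, zero_mul, add_zero]
      · -- injective
        rintro z z' hzz
        have h1 := congrArg (fun w => w.1.1) hzz
        apply Subtype.ext
        funext i
        have h2 : yh i + Mc * (((z.1 i).val : ℕ) : ZMod (p^(s+1)))
            = yh i + Mc * (((z'.1 i).val : ℕ) : ZMod (p^(s+1))) := congrFun h1 i
        have h3 := add_left_cancel h2
        rw [hE'] at h3
        rwa [hπG, hπG] at h3
      · -- surjective
        rintro ⟨x, hx⟩
        have hρx : ∀ i, ρ (x.1 i) = y.1 i := by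
          intro i
          exact congrFun (congrArg (fun w => w.1) hx) i
        have hker : ∀ i, (p^s : ℕ) ∣ (x.1 i - yh i).val := by
          intro i
          apply kernel_dvd hp
          rw [map_sub, hρy, hρx, sub_self]
        set z : Fin k → ZMod p := fun i => (((x.1 i - yh i).val / p^s : ℕ) : ZMod p) with hz
        have hxi : ∀ i, x.1 i = yh i + Mc * (((z i).val : ℕ) : ZMod (p^(s+1))) := by
          intro i
          have h := lemG hp s ((x.1 i - yh i).val / p^s)
          rw [Nat.mul_div_cancel' (hker i), ← hMc] at h
          show x.1 i = yh i
            + Mc * (((((((x.1 i - yh i).val / p^s : ℕ) : ZMod p)).val : ℕ)) : ZMod (p^(s+1)))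
          rw [h, ZMod.natCast_rightInverse (x.1 i - yh i)]
          ring
        have hzL : ∑ i, (2 * π' (y.1 i)) * z i = b₀ := by
          apply (hcond z).mp
          rw [← x.2.2]
          exact Finset.sum_congr rfl (fun i _ => by rw [← hxi i])
        refine ⟨⟨z, hzL⟩, ?_⟩
        apply Subtype.ext
        apply Subtype.ext
        funext i
        exact (hxi i).symm
    obtain ⟨Φ, hΦ⟩ := hbij
    rw [← Nat.card_eq_of_bijective Φ hΦ]
    have := card_linear_solutions_s4 (fun i => 2 * π' (y.1 i)) b₀ ⟨0, hk⟩
      (((h2.mul (haU ⟨0, hk⟩))).ne_zero)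
    exact this
  rw [excCount, excCount, Nat.card_congr (Equiv.sigmaFiberEquiv f).symm,
    Nat.card_eq_fintype_card, Fintype.card_sigma]
  simp_rw [← Nat.card_eq_fintype_card, hfib]
  rw [Finset.sum_const, smul_eq_mul, mul_comm]
  congr 1
  rw [Finset.card_univ, Nat.card_eq_fintype_card]


lemma isUnit_prod_iff' {M N : Type*} [Monoid M] [Monoid N] {x : M × N} :
    IsUnit x ↔ IsUnit x.1 ∧ IsUnit x.2 := by
  constructor
  · exact fun h => ⟨h.map (MonoidHom.fst M N), h.map (MonoidHom.snd M N)⟩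
  · rintro ⟨⟨u, hu⟩, ⟨v, hv⟩⟩
    exact ⟨⟨(u.val, v.val), (u.inv, v.inv), by ext <;> simp [u.val_inv, v.val_inv],
      by ext <;> simp [u.inv_val, v.inv_val]⟩, by ext <;> simp [hu, hv]⟩

lemma excCount_mul (k : ℕ) (c : ℤ) (e : ℕ) {m n : ℕ} (h : Nat.Coprime m n) :
    excCount k c e (m * n) = excCount k c e m * excCount k c e n := by
  rw [excCount, excCount, excCount, ← Nat.card_prod]
  apply Nat.card_congr
  let φ := ZMod.chineseRemainder h
  have hu : ∀ u : ZMod (m * n), IsUnit u ↔ IsUnit (φ u).1 ∧ IsUnit (φ u).2 := by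
    intro u
    rw [← isUnit_prod_iff']
    constructor
    · exact fun hu => hu.map φ.toRingHom
    · intro hu
      have := hu.map φ.symm.toRingHom
      simpa using this
  refine Equiv.trans ?_ (Equiv.subtypeProdEquivProd
    (p := fun y : Fin k → ZMod m => (∀ i, IsUnit (y i) ∧ IsUnit (1 - y i)) ∧ ∑ i, (y i) ^ e = (c : ZMod m))
    (q := fun y : Fin k → ZMod n => (∀ i, IsUnit (y i) ∧ IsUnit (1 - y i)) ∧ ∑ i, (y i) ^ e = (c : ZMod n)))
  refine Equiv.subtypeEquiv ((Equiv.piCongrRight fun _ => φ.toEquiv).trans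
    (Equiv.arrowProdEquivProdArrow _ _ _)) (fun x => ?_)
  have h1 : ∀ u : ZMod (m * n), (φ (1 - u)) = (1 - (φ u).1, 1 - (φ u).2) := by
    intro u; rw [map_sub, map_one]; rfl
  have hfst : ∀ (y : Fin k → ZMod m × ZMod n), (∑ i, y i).1 = ∑ i, (y i).1 :=
    fun y => map_sum (RingHom.fst (ZMod m) (ZMod n)) y Finset.univ
  have hsnd : ∀ (y : Fin k → ZMod m × ZMod n), (∑ i, y i).2 = ∑ i, (y i).2 :=
    fun y => map_sum (RingHom.snd (ZMod m) (ZMod n)) y Finset.univ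
  have hsum : (∑ i, (x i) ^ e = (c : ZMod (m*n))) ↔
      ((∑ i, (φ (x i)).1 ^ e = (c : ZMod m)) ∧ (∑ i, (φ (x i)).2 ^ e = (c : ZMod n))) := by
    rw [← φ.injective.eq_iff, map_sum, map_intCast, Prod.ext_iff]
    simp [map_pow, hfst, hsnd]
  have hunit_iff : (∀ i, IsUnit (x i) ∧ IsUnit (1 - x i)) ↔
      ((∀ i, IsUnit (φ (x i)).1 ∧ IsUnit (1 - (φ (x i)).1)) ∧
       (∀ i, IsUnit (φ (x i)).2 ∧ IsUnit (1 - (φ (x i)).2))) := by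
    rw [← forall_and]
    apply forall_congr'
    intro i
    rw [hu (x i), hu (1 - x i), h1 (x i)]
    dsimp only
    tauto
  simp only [Equiv.trans_apply, Equiv.piCongrRight_apply, Equiv.arrowProdEquivProdArrow,
    Equiv.coe_fn_mk]
  rw [hsum, hunit_iff]
  tauto

lemma excCount_one (k : ℕ) (c : ℤ) (e : ℕ) : excCount k c e 1 = 1 := by
  rw [excCount]
  have h : ∀ x : Fin k → ZMod 1,
      (∀ i, IsUnit (x i) ∧ IsUnit (1 - x i)) ∧ ∑ i, (x i)^e = (c : ZMod 1) := by
    intro x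
    have hu : ∀ u : ZMod 1, IsUnit u := fun u => by
      rw [Subsingleton.elim u (1 : ZMod 1)]; exact isUnit_one
    exact ⟨fun i => ⟨hu _, hu _⟩, Subsingleton.elim _ _⟩
  rw [Nat.card_congr (Equiv.subtypeUnivEquiv h), Nat.card_eq_fintype_card,
    Fintype.card_fun]
  simp

lemma excCount_pow {p : ℕ} (hp : p.Prime) (hp2 : p ≠ 2) (s : ℕ) (hs : 1 ≤ s)
    (k : ℕ) (hk : 0 < k) (c : ℤ) :
    excCount k c 2 (p ^ s) = p ^ ((k - 1) * (s - 1)) * excCount k c 2 p := by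
  induction s, hs using Nat.le_induction with
  | base => simp
  | succ s hs ih =>
    rw [excCount_pow_succ hp hp2 s hs k hk c, ih, ← mul_assoc, ← pow_add]
    congr 2
    obtain ⟨t, rfl⟩ := Nat.exists_eq_add_of_le hs
    have h1 : 1 + t - 1 = t := by omega
    have h2 : 1 + t + 1 - 1 = t + 1 := by omega
    rw [h1, h2]
    ring

theorem excCount_odd_factorization (n : ℕ) (hn : 0 < n) (hodd : Odd n)
    (k : ℕ) (hk : 2 ≤ k) (c : ℤ) :
    excCount k c 2 n =
      ∏ p ∈ n.primeFactors,
        p ^ ((k - 1) * (n.factorization p - 1)) * excCount k c 2 p := by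
  revert hn hodd
  induction n using Nat.recOnPosPrimePosCoprime with
  | prime_pow p t hpp ht =>
    intro _ hodd
    have hp' : p.Prime := hpp
    have hp2 : p ≠ 2 := by
      rintro rfl
      rw [Nat.odd_iff] at hodd
      have h2 : 2 ∣ 2^t := dvd_pow_self 2 ht.ne'
      omega
    rw [excCount_pow hp' hp2 t ht k (by omega) c,
      Nat.primeFactors_prime_pow ht.ne' hpp, Finset.prod_singleton,
      hp'.factorization_pow, Finsupp.single_eq_same]
  | zero => intro h; exact absurd h (lt_irrefl 0)
  | one =>
    intro _ _
    rw [excCount_one]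
    simp
  | coprime a b ha hb hab iha ihb =>
    intro hpos hodd
    obtain ⟨hoa, hob⟩ := Nat.odd_mul.mp hodd
    have ha0 : a ≠ 0 := by omega
    have hb0 : b ≠ 0 := by omega
    rw [excCount_mul k c 2 hab, iha (by omega) hoa, ihb (by omega) hob,
      Nat.Coprime.primeFactors_mul hab,
      Finset.prod_union (Nat.Coprime.disjoint_primeFactors hab)]
    congr 1
    · refine Finset.prod_congr rfl (fun q hq => ?_)
      obtain ⟨hqp, hqa, -⟩ := Nat.mem_primeFactors.mp hq
      have hqb : ¬ q ∣ b := fun hdvd =>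
        hqp.one_lt.ne' (Nat.eq_one_of_dvd_one (hab ▸ Nat.dvd_gcd hqa hdvd))
      rw [Nat.factorization_mul ha0 hb0, Finsupp.add_apply,
        Nat.factorization_eq_zero_of_not_dvd hqb, add_zero]
    · refine Finset.prod_congr rfl (fun q hq => ?_)
      obtain ⟨hqp, hqb, -⟩ := Nat.mem_primeFactors.mp hq
      have hqa : ¬ q ∣ a := fun hdvd =>
        hqp.one_lt.ne' (Nat.eq_one_of_dvd_one (hab ▸ Nat.dvd_gcd hdvd hqb))
      rw [Nat.factorization_mul ha0 hb0, Finsupp.add_apply,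
        Nat.factorization_eq_zero_of_not_dvd hqa, zero_add]
end step
end

section
/- Let p be an odd prime and let k ≥ 2 and c be integers. Then p · 𝒩_{k,c,2}(p) = (−1)^k · [ (2−p)^k − Σ_{i=0}^{⌊k/2⌋} (−1)^{(p−1)i/2} p^i · C(k,2i) · ( 2^{k−2i} − p · Σ_{0 ≤ j ≤ k−2i, p | (j−c)} C(k−2i, j) ) − Σ_{i=0}^{⌊(k−1)/2⌋} (−1)^{(p−1)(i+1)/2} p^{i+1} · C(k,2i+1) · Σ_{0 ≤ j ≤ k−2i−1, p ∤ (j−c)} C(k−2i−1, j) · ((j−c)/p) ], where ((j−c)/p) denotes the Legendre symbol and C(a,b) the binomial coefficient. -/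
open Finset


variable (p : ℕ) [Fact p.Prime]

/-- number of solutions of `∑ y i ^ 2 = c` over `ZMod p` with `m` variables -/
def sphCard (m : ℕ) (c : ZMod p) : ℕ :=
  #(univ.filter fun y : Fin m → ZMod p => ∑ i, y i ^ 2 = c)

lemma sphCard_zero (c : ZMod p) : sphCard p 0 c = if c = 0 then 1 else 0 := by
  classical
  rw [sphCard]
  rcases eq_or_ne c 0 with h | h
  · subst h
    simp [filter_true_of_mem, Finset.card_univ]
  · rw [if_neg h, Finset.card_eq_zero, Finset.filter_eq_empty_iff]
    intro y _
    simpa using fun h' => h h'.symm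

lemma sphCard_succ (m : ℕ) (c : ZMod p) :
    sphCard p (m + 1) c = ∑ x : ZMod p, sphCard p m (c - x ^ 2) := by
  classical
  have h : ∀ (n : ℕ) (d : ZMod p), (sphCard p n d : ℤ) =
      ∑ y : Fin n → ZMod p, if ∑ i, y i ^ 2 = d then 1 else 0 := by
    intro n d
    rw [sphCard, Finset.card_filter]
    push_cast
    rfl
  have : (sphCard p (m+1) c : ℤ) = ∑ x : ZMod p, (sphCard p m (c - x ^ 2) : ℤ) := by
    rw [h]
    rw [Fintype.sum_equiv (Fin.consEquiv (fun _ => ZMod p)).symm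
      (fun y : Fin (m+1) → ZMod p => if ∑ i, y i ^ 2 = c then (1:ℤ) else 0)
      (fun z : ZMod p × (Fin m → ZMod p) =>
        if z.1 ^ 2 + ∑ i, z.2 i ^ 2 = c then (1:ℤ) else 0)
      (fun y => by simp [Fin.consEquiv, Fin.sum_univ_succ, Fin.tail]; congr)]
    rw [Fintype.sum_prod_type]
    refine Fintype.sum_congr _ _ fun x => ?_
    rw [h]
    refine Fintype.sum_congr _ _ fun y => ?_
    congr 1
    simp [eq_sub_iff_add_eq']
  exact_mod_cast this

lemma sum_sq_fiber (g : ZMod p → ℤ) (hp2 : p ≠ 2) :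
    ∑ x : ZMod p, g (x ^ 2) = ∑ a : ZMod p, (quadraticChar (ZMod p) a + 1) * g a := by
  classical
  have hchar : ringChar (ZMod p) ≠ 2 := (ZMod.ringChar_zmod_n p).substr hp2
  rw [← Finset.sum_fiberwise' (univ : Finset (ZMod p)) (fun x => x ^ 2) g]
  refine Finset.sum_congr rfl fun a _ => ?_
  rw [Finset.sum_const, nsmul_eq_mul]
  congr 1
  have h2 := quadraticChar_card_sqrts hchar a
  rw [← h2]
  norm_cast
  congr 1
  rw [Set.toFinset_setOf]

lemma sum_char_shift (hp2 : p ≠ 2) (c : ZMod p) :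
    ∑ a : ZMod p, quadraticChar (ZMod p) (c - a) = 0 := by
  have hchar : ringChar (ZMod p) ≠ 2 := (ZMod.ringChar_zmod_n p).substr hp2
  rw [Fintype.sum_equiv (Equiv.subLeft c) (fun a => quadraticChar (ZMod p) (c - a))
    (fun a => quadraticChar (ZMod p) a) (fun a => by simp)]
  exact quadraticChar_sum_zero hchar

lemma jacobi_quad (hp2 : p ≠ 2) (c : ZMod p) :
    ∑ a : ZMod p, quadraticChar (ZMod p) a * quadraticChar (ZMod p) (c - a)
      = quadraticChar (ZMod p) (-1) * ((if c = 0 then (p : ℤ) else 0) - 1) := by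
  classical
  have hchar : ringChar (ZMod p) ≠ 2 := (ZMod.ringChar_zmod_n p).substr hp2
  set χ := quadraticChar (ZMod p) with hχ
  rcases eq_or_ne c 0 with rfl | hc
  · have h1 : ∀ a : ZMod p, χ a * χ (0 - a) = χ (-1) * (if a = 0 then 0 else 1) := by
      intro a
      rcases eq_or_ne a 0 with rfl | ha
      · simp [hχ]
      · rw [if_neg ha, zero_sub, ← neg_one_mul, map_mul, mul_one]
        have h5 : χ a * χ a = 1 := by
          have := quadraticChar_sq_one (F := ZMod p) ha
          rwa [sq] at this
        calc χ a * (χ (-1) * χ a) = χ (-1) * (χ a * χ a) := by ring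
        _ = χ (-1) * 1 := by rw [h5]
        _ = _ := by rw [mul_one]
    rw [Finset.sum_congr rfl fun a _ => h1 a, ← Finset.mul_sum]
    congr 1
    rw [if_pos rfl]
    rw [Finset.sum_ite, Finset.sum_const, Finset.sum_const]
    simp only [smul_zero, zero_add, nsmul_eq_mul, mul_one]
    rw [Finset.filter_ne', Finset.card_erase_of_mem (Finset.mem_univ 0)]
    rw [Finset.card_univ, ZMod.card]
    have hp1 : 1 ≤ p := (Fact.out : p.Prime).one_lt.le
    push_cast [Nat.cast_sub hp1]
    ring
  · rw [if_neg hc]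
    have h0 : ∑ a : ZMod p, χ a * χ (c - a)
        = ∑ a ∈ (univ : Finset (ZMod p)) \ {0}, χ a * χ (c - a) := by
      rw [Finset.sum_sdiff_eq_sub (Finset.singleton_subset_iff.mpr (Finset.mem_univ 0))]
      simp [hχ]
    have h1 : ∀ a ∈ (univ : Finset (ZMod p)) \ {0}, χ a * χ (c - a) = χ (c * a⁻¹ - 1) := by
      intro a ha
      have ha0 : a ≠ 0 := by simpa using (Finset.mem_sdiff.mp ha).2
      have : χ a * χ (c - a) = χ (a * (c - a)) := (map_mul χ a (c - a)).symm
      rw [this]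
      have ha2 : a * (c - a) = a ^ 2 * (c * a⁻¹ - 1) := by
        field_simp
      rw [ha2, map_mul, map_pow]
      have := quadraticChar_sq_one (F := ZMod p) ha0
      rw [this, one_mul]
    rw [h0, Finset.sum_congr rfl h1]
    have h2 : ∑ a ∈ (univ : Finset (ZMod p)) \ {0}, χ (c * a⁻¹ - 1)
        = ∑ b ∈ (univ : Finset (ZMod p)) \ {0}, χ (b - 1) := by
      refine Finset.sum_nbij' (fun a => c * a⁻¹) (fun b => c * b⁻¹) ?_ ?_ ?_ ?_ ?_
      · intro a ha
        have ha0 : a ≠ 0 := by simpa using (Finset.mem_sdiff.mp ha).2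
        simp only [Finset.mem_sdiff, Finset.mem_univ, true_and, Finset.mem_singleton]
        exact fun h => by simp [mul_eq_zero, hc, inv_eq_zero, ha0] at h
      · intro b hb
        have hb0 : b ≠ 0 := by simpa using (Finset.mem_sdiff.mp hb).2
        simp only [Finset.mem_sdiff, Finset.mem_univ, true_and, Finset.mem_singleton]
        exact fun h => by simp [mul_eq_zero, hc, inv_eq_zero, hb0] at h
      · intro a ha
        have ha0 : a ≠ 0 := by simpa using (Finset.mem_sdiff.mp ha).2
        field_simp
      · intro b hb
        have hb0 : b ≠ 0 := by simpa using (Finset.mem_sdiff.mp hb).2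
        field_simp
      · intro a ha
        rfl
    rw [h2]
    have h3 : ∑ b ∈ (univ : Finset (ZMod p)) \ {0}, χ (b - 1)
        = (∑ b : ZMod p, χ (b - 1)) - χ (-1) := by
      rw [Finset.sum_sdiff_eq_sub (Finset.singleton_subset_iff.mpr (Finset.mem_univ 0))]
      simp
    rw [h3]
    have h4 : ∑ b : ZMod p, χ (b - 1) = 0 := by
      rw [Fintype.sum_equiv (Equiv.subRight (1 : ZMod p)) (fun b => χ (b - 1)) χ (fun b => rfl)]
      exact quadraticChar_sum_zero hchar
    rw [h4]
    ring

/-- secondary term in the sphere-count formula -/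
def Tval (m : ℕ) (c : ZMod p) : ℤ :=
  if m % 2 = 0 then
    ((if c = 0 then (p : ℤ) else 0) - 1) * (p : ℤ) ^ (m / 2) *
      (quadraticChar (ZMod p) (-1)) ^ (m / 2)
  else
    (p : ℤ) ^ (m / 2 + 1) * (quadraticChar (ZMod p) (-1)) ^ (m / 2) *
      quadraticChar (ZMod p) c

lemma sphCard_formula (hp2 : p ≠ 2) (m : ℕ) (c : ZMod p) :
    (p : ℤ) * sphCard p m c = (p : ℤ) ^ m + Tval p m c := by
  classical
  set χ := quadraticChar (ZMod p) with hχ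
  induction m generalizing c with
  | zero =>
    rw [sphCard_zero, Tval]
    rcases eq_or_ne c 0 with rfl | hc
    · simp
    · simp [hc]
  | succ m ih =>
    rw [sphCard_succ]
    push_cast
    rw [Finset.mul_sum]
    have h1 : ∀ x : ZMod p, (p : ℤ) * (sphCard p m (c - x ^ 2) : ℤ)
        = (p : ℤ) ^ m + Tval p m (c - x ^ 2) := fun x => ih _
    rw [Finset.sum_congr rfl fun x _ => h1 x, Finset.sum_add_distrib, Finset.sum_const,
      Finset.card_univ, ZMod.card, nsmul_eq_mul]
    have h2 : ∑ x : ZMod p, Tval p m (c - x ^ 2)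
        = ∑ a : ZMod p, (χ a + 1) * Tval p m (c - a) :=
      sum_sq_fiber p (fun a => Tval p m (c - a)) hp2
    rw [h2]
    have hsum : ∑ a : ZMod p, (χ a + 1) * Tval p m (c - a) = Tval p (m + 1) c := by
      rcases Nat.even_or_odd m with he | ho
      · -- m even, say m = 2 i
        obtain ⟨i, hi⟩ := he
        have hm : m = 2 * i := by omega
        have hmod : m % 2 = 0 := by omega
        have hdiv : m / 2 = i := by omega
        have hmod' : (m + 1) % 2 = 1 := by omega
        have hdiv' : (m + 1) / 2 = i := by omega
        have hT : ∀ a : ZMod p, Tval p m (c - a)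
            = ((if a = c then (p:ℤ) else 0) - 1) * (p : ℤ) ^ i * (χ (-1)) ^ i := by
          intro a
          rw [Tval, if_pos hmod, hdiv]
          congr 2
          simp [sub_eq_zero, eq_comm]
        rw [Finset.sum_congr rfl fun a _ => by rw [hT a]]
        have expand : ∀ a : ZMod p,
            (χ a + 1) * (((if a = c then (p:ℤ) else 0) - 1) * (p : ℤ) ^ i * (χ (-1)) ^ i)
            = ((p : ℤ) ^ i * (χ (-1)) ^ i) *
              ((χ a * (if a = c then (p:ℤ) else 0)) - χ a + (if a = c then (p:ℤ) else 0) - 1) := by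
          intro a; split_ifs <;> ring
        rw [Finset.sum_congr rfl fun a _ => expand a, ← Finset.mul_sum]
        have hs : ∑ a : ZMod p,
            ((χ a * (if a = c then (p:ℤ) else 0)) - χ a + (if a = c then (p:ℤ) else 0) - 1)
            = (p : ℤ) * χ c := by
          simp only [Finset.sum_sub_distrib, Finset.sum_add_distrib]
          rw [quadraticChar_sum_zero ((ZMod.ringChar_zmod_n p).substr hp2)]
          have e1 : ∑ a : ZMod p, χ a * (if a = c then (p:ℤ) else 0) = χ c * (p : ℤ) := by
            refine Finset.sum_eq_single_of_mem c (Finset.mem_univ c) (fun a _ h => ?_) |>.trans ?_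
            · rw [if_neg h, mul_zero]
            · rw [if_pos rfl]
          have e2 : ∑ a : ZMod p, (if a = c then (p:ℤ) else 0) = (p : ℤ) := by
            rw [Finset.sum_ite_eq' Finset.univ c (fun _ => (p:ℤ)), if_pos (Finset.mem_univ c)]
          rw [e1, e2]
          simp only [Finset.sum_const, Finset.card_univ, ZMod.card, nsmul_eq_mul, mul_one]
          ring
        rw [hs]
        rw [show Tval p (m+1) c = (p : ℤ) ^ (i + 1) * (χ (-1)) ^ i * χ c by
          rw [Tval, if_neg (by omega : ¬ (m+1) % 2 = 0), hdiv']]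
        ring
      · -- m odd, say m = 2 i + 1
        obtain ⟨i, hi⟩ := ho
        have hmod : ¬ m % 2 = 0 := by omega
        have hdiv : m / 2 = i := by omega
        have hmod' : (m + 1) % 2 = 0 := by omega
        have hdiv' : (m + 1) / 2 = i + 1 := by omega
        have hT : ∀ a : ZMod p, Tval p m (c - a)
            = (p : ℤ) ^ (i + 1) * (χ (-1)) ^ i * χ (c - a) := by
          intro a
          rw [Tval, if_neg hmod, hdiv]
        rw [Finset.sum_congr rfl fun a _ => by rw [hT a]]
        have expand : ∀ a : ZMod p,
            (χ a + 1) * ((p : ℤ) ^ (i + 1) * (χ (-1)) ^ i * χ (c - a))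
            = ((p : ℤ) ^ (i + 1) * (χ (-1)) ^ i) * (χ a * χ (c - a) + χ (c - a)) := by
          intro a; ring
        rw [Finset.sum_congr rfl fun a _ => expand a, ← Finset.mul_sum]
        rw [Finset.sum_add_distrib, sum_char_shift p hp2, add_zero, jacobi_quad p hp2]
        rw [show Tval p (m+1) c
          = ((if c = 0 then (p:ℤ) else 0) - 1) * (p : ℤ) ^ (i+1) * (χ (-1)) ^ (i+1) by
          rw [Tval, if_pos hmod', hdiv']]
        ring
    rw [hsum]
    ring

/-- sphere count over a general index type -/
def sphCardOn (ι : Type) [Fintype ι] [DecidableEq ι] (c : ZMod p) : ℕ :=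
  #(univ.filter fun y : ι → ZMod p => ∑ i, y i ^ 2 = c)

lemma sphCardOn_eq (ι : Type) [Fintype ι] [DecidableEq ι] (c : ZMod p) :
    sphCardOn p ι c = sphCard p (Fintype.card ι) c := by
  classical
  rw [sphCardOn, sphCard]
  set e := Fintype.equivFin ι with he
  refine Finset.card_nbij' (fun y => y ∘ e.symm) (fun z => z ∘ e) ?_ ?_ ?_ ?_
  · intro y hy
    rw [Finset.mem_coe, Finset.mem_filter] at hy ⊢
    refine ⟨Finset.mem_univ _, ?_⟩
    rw [← hy.2]
    exact Equiv.sum_comp e.symm (fun i => y i ^ 2)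
  · intro z hz
    rw [Finset.mem_coe, Finset.mem_filter] at hz ⊢
    refine ⟨Finset.mem_univ _, ?_⟩
    rw [← hz.2]
    exact Equiv.sum_comp e (fun t => z t ^ 2)
  · intro y _; funext i; simp
  · intro z _; funext t; simp

lemma card_restrict (k : ℕ) (A B : Finset (Fin k)) (hB : B ⊆ univ \ A) (c : ZMod p) :
    #(univ.filter fun x : Fin k → ZMod p =>
        (∑ i, x i ^ 2 = c) ∧ (∀ i ∈ B, x i = 0) ∧ (∀ i ∈ (univ \ A) \ B, x i = 1))
      = sphCardOn p ↥A (c - (((univ \ A) \ B).card : ℕ)) := by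
  classical
  set C := (univ \ A) \ B with hC
  have hCB : ∀ i ∈ univ \ A, i ∉ B → i ∈ C := by
    intro i hi hib
    rw [hC, Finset.mem_sdiff]
    exact ⟨hi, hib⟩
  have hsplit : ∀ x : Fin k → ZMod p,
      ∑ i, x i ^ 2 = (∑ a : ↥A, x a.1 ^ 2) + ∑ i ∈ B, x i ^ 2 + ∑ i ∈ C, x i ^ 2 := by
    intro x
    have h1 : ∑ a : ↥A, x a.1 ^ 2 = ∑ i ∈ A, x i ^ 2 :=
      Finset.sum_coe_sort A (fun i => x i ^ 2)
    have h2 : ∑ i ∈ univ \ A, x i ^ 2 + ∑ i ∈ A, x i ^ 2 = ∑ i, x i ^ 2 :=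
      Finset.sum_sdiff (Finset.subset_univ A)
    have h3 : ∑ i ∈ C, x i ^ 2 + ∑ i ∈ B, x i ^ 2 = ∑ i ∈ univ \ A, x i ^ 2 :=
      Finset.sum_sdiff hB
    rw [h1, ← h2, ← h3]
    ring
  rw [sphCardOn]
  refine Finset.card_nbij' (fun x => fun a : ↥A => x a.1)
    (fun y => fun i => if h : i ∈ A then y ⟨i, h⟩ else if i ∈ C then 1 else 0) ?_ ?_ ?_ ?_
  · intro x hx
    rw [Finset.mem_coe, Finset.mem_filter] at hx ⊢
    obtain ⟨-, hsum, hB0, hC1⟩ := hx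
    refine ⟨Finset.mem_univ _, ?_⟩
    have hb : ∑ i ∈ B, x i ^ 2 = 0 :=
      Finset.sum_eq_zero fun i hi => by rw [hB0 i hi]; ring
    have hc1 : ∑ i ∈ C, x i ^ 2 = (C.card : ZMod p) := by
      rw [Finset.sum_congr rfl fun i hi => by rw [hC1 i hi]]
      simp
    have := hsplit x
    rw [hsum, hb, hc1, add_zero] at this
    rw [eq_sub_iff_add_eq]
    exact this.symm
  · intro y hy
    rw [Finset.mem_coe, Finset.mem_filter] at hy ⊢
    obtain ⟨-, hsum⟩ := hy
    refine ⟨Finset.mem_univ _, ?_, ?_, ?_⟩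
    · set x : Fin k → ZMod p :=
        fun i => if h : i ∈ A then y ⟨i, h⟩ else if i ∈ C then 1 else 0 with hx
      have hb : ∑ i ∈ B, x i ^ 2 = 0 := by
        refine Finset.sum_eq_zero fun i hi => ?_
        have hiA : i ∉ A := by
          have := hB hi
          rw [Finset.mem_sdiff] at this
          exact this.2
        have hiC : i ∉ C := by
          rw [hC, Finset.mem_sdiff]
          push_neg
          intro _; exact hi
        rw [hx]
        simp [hiA, hiC]
      have hc1 : ∑ i ∈ C, x i ^ 2 = (C.card : ZMod p) := by
        rw [Finset.sum_congr rfl (g := fun _ => (1 : ZMod p)) fun i hi => ?_]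
        · simp
        · have hiA : i ∉ A := by
            rw [hC, Finset.mem_sdiff, Finset.mem_sdiff] at hi
            exact hi.1.2
          rw [hx]
          simp [hiA, hi]
      have ha : ∑ a : ↥A, x a.1 ^ 2 = ∑ a : ↥A, y a ^ 2 := by
        refine Finset.sum_congr rfl fun a _ => ?_
        rw [hx]
        simp [a.2]
      rw [hsplit x, hb, hc1, ha, hsum]
      ring
    · intro i hi
      have hiA : i ∉ A := by
        have := hB hi
        rw [Finset.mem_sdiff] at this
        exact this.2
      have hiC : i ∉ C := by
        rw [hC, Finset.mem_sdiff]
        push_neg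
        intro _; exact hi
      simp [hiA, hiC]
    · intro i hi
      have hiA : i ∉ A := by
        rw [hC, Finset.mem_sdiff, Finset.mem_sdiff] at hi
        exact hi.1.2
      simp [hiA, hi]
  · intro x hx
    rw [Finset.mem_coe, Finset.mem_filter] at hx
    obtain ⟨-, -, hB0, hC1⟩ := hx
    funext i
    by_cases hA : i ∈ A
    · simp [hA]
    · by_cases hiC : i ∈ C
      · simp [hA, hiC, hC1 i hiC]
      · have hiB : i ∈ B := by
          by_contra hiB
          exact hiC (hCB i (Finset.mem_sdiff.mpr ⟨Finset.mem_univ i, hA⟩) hiB)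
        simp [hA, hiC, hB0 i hiB]
  · intro y _
    funext a
    simp [a.2]

def exCard (k : ℕ) (c : ZMod p) : ℕ :=
  #(univ.filter fun x : Fin k → ZMod p =>
    (∀ i, x i ≠ 0 ∧ x i ≠ 1) ∧ ∑ i, x i ^ 2 = c)

lemma boole_mul_ite (P Q : Prop) [Decidable P] [Decidable Q] :
    (if P ∧ Q then (1:ℤ) else 0) = (if P then 1 else 0) * (if Q then 1 else 0) := by
  split_ifs <;> simp_all

lemma exCard_expand (k : ℕ) (c : ZMod p) :
    (exCard p k c : ℤ) =
      ∑ A ∈ (univ : Finset (Fin k)).powerset, (-1) ^ (k - A.card) *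
        ∑ B ∈ (univ \ A).powerset,
          (sphCard p A.card (c - (((univ \ A) \ B).card : ℕ)) : ℤ) := by
  classical
  have step1 : (exCard p k c : ℤ) = ∑ x : Fin k → ZMod p,
      (if ∑ i, x i ^ 2 = c then (1:ℤ) else 0) *
        ∏ i, (if x i ≠ 0 ∧ x i ≠ 1 then (1:ℤ) else 0) := by
    rw [exCard, Finset.card_filter]
    push_cast
    refine Finset.sum_congr rfl fun x _ => ?_
    rw [boole_mul_ite, Fintype.prod_boole]
    split_ifs <;> simp_all
  have step2 : ∀ u : ZMod p, (if u ≠ 0 ∧ u ≠ 1 then (1:ℤ) else 0)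
      = 1 + (-((if u = 0 then (1:ℤ) else 0) + (if u = 1 then (1:ℤ) else 0))) := by
    intro u
    by_cases h0 : u = 0
    · have h1 : u ≠ 1 := by rw [h0]; exact zero_ne_one
      simp [h0, h1]
    · by_cases h1 : u = 1
      · simp [h0, h1]
      · simp [h0, h1]
  have step3 : ∀ x : Fin k → ZMod p, ∏ i, (if x i ≠ 0 ∧ x i ≠ 1 then (1:ℤ) else 0)
      = ∑ A ∈ (univ : Finset (Fin k)).powerset, (-1) ^ (k - A.card) *
          ∑ B ∈ (univ \ A).powerset,
            (∏ i ∈ B, (if x i = 0 then (1:ℤ) else 0)) *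
              ∏ i ∈ (univ \ A) \ B, (if x i = 1 then (1:ℤ) else 0) := by
    intro x
    rw [Finset.prod_congr rfl fun i _ => step2 (x i)]
    rw [Finset.prod_add (fun _ => (1:ℤ))
      (fun i => -((if x i = 0 then (1:ℤ) else 0) + (if x i = 1 then (1:ℤ) else 0))) univ]
    refine Finset.sum_congr rfl fun A hA => ?_
    rw [Finset.prod_const_one, one_mul]
    have hneg : ∏ i ∈ univ \ A,
        (-((if x i = 0 then (1:ℤ) else 0) + (if x i = 1 then (1:ℤ) else 0)))
        = (-1) ^ ((univ \ A).card) * ∏ i ∈ univ \ A,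
            ((if x i = 0 then (1:ℤ) else 0) + (if x i = 1 then (1:ℤ) else 0)) := by
      rw [Finset.prod_congr rfl fun i (_ : i ∈ univ \ A) =>
        (neg_one_mul ((if x i = 0 then (1:ℤ) else 0) + (if x i = 1 then (1:ℤ) else 0))).symm]
      rw [Finset.prod_mul_distrib, Finset.prod_const]
    rw [hneg, Finset.prod_add (fun i => (if x i = 0 then (1:ℤ) else 0))
      (fun i => (if x i = 1 then (1:ℤ) else 0)) (univ \ A)]
    have hcard : (univ \ A).card = k - A.card := by
      rw [Finset.card_sdiff_of_subset (Finset.subset_univ A), Finset.card_univ, Fintype.card_fin]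
    rw [hcard]
  -- abbreviations
  set ix : (Fin k → ZMod p) → ℤ := fun x => if ∑ i, x i ^ 2 = c then (1:ℤ) else 0 with hix
  set h : Finset (Fin k) → Finset (Fin k) → (Fin k → ZMod p) → ℤ := fun A B x =>
    (∏ i ∈ B, (if x i = 0 then (1:ℤ) else 0)) *
      ∏ i ∈ (univ \ A) \ B, (if x i = 1 then (1:ℤ) else 0) with hh
  have step4 : (exCard p k c : ℤ) = ∑ A ∈ (univ : Finset (Fin k)).powerset,
      (-1) ^ (k - A.card) * ∑ B ∈ (univ \ A).powerset,
        ∑ x : Fin k → ZMod p, ix x * h A B x := by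
    rw [step1]
    have e1 : ∀ x : Fin k → ZMod p, ix x * (∏ i, (if x i ≠ 0 ∧ x i ≠ 1 then (1:ℤ) else 0))
        = ∑ A ∈ (univ : Finset (Fin k)).powerset,
            ∑ B ∈ (univ \ A).powerset, (-1) ^ (k - A.card) * (ix x * h A B x) := by
      intro x
      rw [step3 x, Finset.mul_sum]
      refine Finset.sum_congr rfl fun A _ => ?_
      rw [Finset.mul_sum, Finset.mul_sum]
      refine Finset.sum_congr rfl fun B _ => ?_
      ring
    rw [Finset.sum_congr rfl fun x _ => e1 x]
    rw [Finset.sum_comm]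
    refine Finset.sum_congr rfl fun A _ => ?_
    rw [Finset.sum_comm]
    rw [Finset.mul_sum]
    refine Finset.sum_congr rfl fun B _ => ?_
    rw [Finset.mul_sum]
  rw [step4]
  refine Finset.sum_congr rfl fun A _ => ?_
  congr 1
  refine Finset.sum_congr rfl fun B hB => ?_
  have hBsub : B ⊆ univ \ A := Finset.mem_powerset.mp hB
  have e2 : ∀ x : Fin k → ZMod p, ix x * h A B x
      = if (∑ i, x i ^ 2 = c) ∧ (∀ i ∈ B, x i = 0) ∧
          (∀ i ∈ (univ \ A) \ B, x i = 1) then (1:ℤ) else 0 := by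
    intro x
    rw [hix, hh]
    simp only
    rw [Finset.prod_boole, Finset.prod_boole, boole_mul_ite, boole_mul_ite]
    split_ifs <;> rfl
  rw [Finset.sum_congr rfl fun x _ => e2 x]
  rw [← Finset.sum_filter, Finset.sum_const, nsmul_eq_mul, mul_one]
  rw [card_restrict p k A B hBsub c, sphCardOn_eq, Fintype.card_coe]

lemma sum_range_parity (f : ℕ → ℤ) (n : ℕ) :
    ∑ m ∈ range (n + 1), f m
      = ∑ i ∈ range (n / 2 + 1), f (2 * i) + ∑ i ∈ range ((n + 1) / 2), f (2 * i + 1) := by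
  induction n with
  | zero => simp
  | succ n ih =>
    rw [Finset.sum_range_succ, ih]
    rcases Nat.even_or_odd (n + 1) with he | ho
    · obtain ⟨t, ht⟩ := he
      have h1 : (n + 1) / 2 + 1 = t + 1 := by omega
      have h2 : n / 2 + 1 = t := by omega
      have h3 : (n + 1 + 1) / 2 = (n + 1) / 2 := by omega
      rw [h3, h1, h2, Finset.sum_range_succ, show 2 * t = n + 1 by omega]
      ring
    · obtain ⟨t, ht⟩ := ho
      have h2 : (n + 1) / 2 + 1 = n / 2 + 1 := by omega
      have h3 : (n + 1 + 1) / 2 = t + 1 := by omega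
      have h4 : (n + 1) / 2 = t := by omega
      rw [h3, h2, h4, Finset.sum_range_succ (fun i => f (2 * i + 1)) t,
        show 2 * t + 1 = n + 1 by omega]
      ring

lemma exCard_grouped (hp2 : p ≠ 2) (k : ℕ) (c : ZMod p) :
    (p : ℤ) * (exCard p k c : ℤ)
      = ∑ m ∈ range (k + 1), (k.choose m : ℤ) * ((-1) ^ (k - m) *
          ∑ j ∈ range (k - m + 1), ((k - m).choose j : ℤ) *
            ((p : ℤ) ^ m + Tval p m (c - (j : ℕ)))) := by
  classical
  have inner : ∀ A : Finset (Fin k),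
      (∑ B ∈ ((univ : Finset (Fin k)) \ A).powerset,
        (sphCard p A.card (c - (((((univ : Finset (Fin k))) \ A) \ B).card : ℕ)) : ℤ))
      = ∑ j ∈ range (k - A.card + 1), ((k - A.card).choose j : ℤ) *
          (sphCard p A.card (c - (j : ℕ)) : ℤ) := by
    intro A
    have hcardA : ((univ : Finset (Fin k)) \ A).card = k - A.card := by
      rw [Finset.card_sdiff_of_subset (Finset.subset_univ A), Finset.card_univ, Fintype.card_fin]
    have e1 : ∀ B ∈ ((univ : Finset (Fin k)) \ A).powerset,
        (sphCard p A.card (c - (((((univ : Finset (Fin k))) \ A) \ B).card : ℕ)) : ℤ)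
        = (fun b : ℕ => (sphCard p A.card (c - ((k - A.card - b : ℕ))) : ℤ)) B.card := by
      intro B hB
      have hc2 : ((((univ : Finset (Fin k))) \ A) \ B).card = k - A.card - B.card := by
        rw [Finset.card_sdiff_of_subset (Finset.mem_powerset.mp hB), hcardA]
      simp only [hc2]
    refine (Finset.sum_congr rfl e1).trans ?_
    refine (Finset.sum_powerset_apply_card
      (fun b : ℕ => (sphCard p A.card (c - ((k - A.card - b : ℕ))) : ℤ))).trans ?_
    rw [hcardA]
    have hrefl := Finset.sum_range_reflect
      (fun j => ((k - A.card).choose j : ℤ) * (sphCard p A.card (c - (j : ℕ)) : ℤ))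
      (k - A.card + 1)
    simp only [Nat.add_sub_cancel] at hrefl
    rw [← hrefl]
    refine Finset.sum_congr rfl fun b hb => ?_
    rw [Finset.mem_range] at hb
    have hble : b ≤ k - A.card := by omega
    rw [nsmul_eq_mul, Nat.choose_symm hble]
  have inner' : ∀ A ∈ (univ : Finset (Fin k)).powerset,
      (-1 : ℤ) ^ (k - A.card) * (∑ B ∈ ((univ : Finset (Fin k)) \ A).powerset,
        (sphCard p A.card (c - (((((univ : Finset (Fin k))) \ A) \ B).card : ℕ)) : ℤ))
      = (fun m => (-1 : ℤ) ^ (k - m) * ∑ j ∈ range (k - m + 1),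
          ((k - m).choose j : ℤ) * (sphCard p m (c - (j : ℕ)) : ℤ)) A.card := by
    intro A _
    simp only
    rw [inner A]
  have expand := (exCard_expand p k c).trans
    ((Finset.sum_congr rfl inner').trans
      (Finset.sum_powerset_apply_card
        (fun m => (-1 : ℤ) ^ (k - m) * ∑ j ∈ range (k - m + 1),
          ((k - m).choose j : ℤ) * (sphCard p m (c - (j : ℕ)) : ℤ))))
  rw [Finset.card_univ, Fintype.card_fin] at expand
  rw [expand, Finset.mul_sum]
  refine Finset.sum_congr rfl fun m hm => ?_
  rw [nsmul_eq_mul]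
  rw [show (p:ℤ) * ((k.choose m : ℤ) * ((-1:ℤ)^(k-m) * ∑ j ∈ range (k - m + 1),
      ((k - m).choose j : ℤ) * (sphCard p m (c - (j : ℕ)) : ℤ)))
    = (k.choose m : ℤ) * ((-1:ℤ)^(k-m) * ((p:ℤ) * ∑ j ∈ range (k - m + 1),
      ((k - m).choose j : ℤ) * (sphCard p m (c - (j : ℕ)) : ℤ))) by ring]
  congr 2
  rw [Finset.mul_sum]
  refine Finset.sum_congr rfl fun j hj => ?_
  rw [← sphCard_formula p hp2 m (c - (j : ℕ))]
  ring

lemma chi_neg_one (hp2 : p ≠ 2) (hmod : p % 2 = 1) :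
    quadraticChar (ZMod p) (-1) = (-1 : ℤ) ^ (p / 2) := by
  rw [quadraticChar_neg_one ((ZMod.ringChar_zmod_n p).substr hp2), ZMod.card]
  exact ZMod.χ₄_eq_neg_one_pow hmod

lemma excCount_eq (k : ℕ) (c : ℤ) : excCount k c 2 p = exCard p k (c : ZMod p) := by
  classical
  have he : ∀ x : Fin k → ZMod p,
      ((∀ i, IsUnit (x i) ∧ IsUnit (1 - x i)) ∧ ∑ i, (x i) ^ 2 = (c : ZMod p))
      ↔ ((∀ i, x i ≠ 0 ∧ x i ≠ 1) ∧ ∑ i, x i ^ 2 = (c : ZMod p)) := by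
    intro x
    apply and_congr_left'
    apply forall_congr'
    intro i
    rw [isUnit_iff_ne_zero, isUnit_iff_ne_zero, sub_ne_zero]
    exact and_congr_right' ne_comm
  rw [excCount, exCard]
  rw [Nat.card_congr (Equiv.subtypeEquivRight he)]
  rw [Nat.card_eq_fintype_card, Fintype.card_subtype]

theorem excCount_odd_prime (p : ℕ) (hp : p.Prime) (hodd : Odd p)
    (k : ℕ) (hk : 2 ≤ k) (c : ℤ) :
    (p : ℤ) * (excCount k c 2 p : ℤ) =
      (-1) ^ k *
        ((2 - (p : ℤ)) ^ k
          - ∑ i ∈ Finset.range (k / 2 + 1),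
              (-1 : ℤ) ^ ((p - 1) * i / 2) * (p : ℤ) ^ i * (k.choose (2 * i) : ℤ) *
                ((2 : ℤ) ^ (k - 2 * i)
                  - (p : ℤ) *
                    ∑ j ∈ (Finset.range (k - 2 * i + 1)).filter
                        (fun (j : ℕ) => (p : ℤ) ∣ (j : ℤ) - c),
                      ((k - 2 * i).choose j : ℤ))
          - ∑ i ∈ Finset.range ((k - 1) / 2 + 1),
              (-1 : ℤ) ^ ((p - 1) * (i + 1) / 2) * (p : ℤ) ^ (i + 1) *
                (k.choose (2 * i + 1) : ℤ) *
                ∑ j ∈ (Finset.range (k - 2 * i - 1 + 1)).filter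
                    (fun (j : ℕ) => ¬ (p : ℤ) ∣ (j : ℤ) - c),
                  ((k - 2 * i - 1).choose j : ℤ) * @legendreSym p ⟨hp⟩ ((j : ℤ) - c)) := by
  haveI : Fact p.Prime := ⟨hp⟩
  have hp2 : p ≠ 2 := by obtain ⟨t, ht⟩ := hodd; omega
  have hmod : p % 2 = 1 := Nat.odd_iff.mp hodd
  obtain ⟨t, ht⟩ : ∃ t, p = 2 * t + 1 := ⟨p / 2, by omega⟩
  set χ := quadraticChar (ZMod p) with hχ
  have hchipow : ∀ i : ℕ, (χ (-1)) ^ i = (-1 : ℤ) ^ ((p - 1) * i / 2) := by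
    intro i
    rw [hχ, chi_neg_one p hp2 hmod, ← pow_mul]
    congr 1
    rw [show p / 2 = t by omega,
      show (p - 1) * i = 2 * (t * i) by rw [show p - 1 = 2 * t by omega]; ring]
    rw [Nat.mul_div_cancel_left _ (by norm_num : 0 < 2)]
  have hdelta : ∀ j : ℕ, ((c : ZMod p) - (j : ℕ) = 0) ↔ ((p : ℤ) ∣ (j : ℤ) - c) := by
    intro j
    rw [sub_eq_zero, ← ZMod.intCast_zmod_eq_zero_iff_dvd,
      show (((j : ℤ) - c : ℤ) : ZMod p) = ((j : ℕ) : ZMod p) - ((c : ℤ) : ZMod p) by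
        push_cast; ring,
      sub_eq_zero]
    exact eq_comm
  have hleg : ∀ j : ℕ, χ ((c : ZMod p) - (j : ℕ)) = χ (-1) * legendreSym p ((j : ℤ) - c) := by
    intro j
    have h1 : (c : ZMod p) - (j : ℕ) = (-1) * ((((j : ℤ) - c : ℤ)) : ZMod p) := by
      push_cast; ring
    rw [h1, map_mul]
    rfl
  have hlegzero : ∀ j : ℕ, (p : ℤ) ∣ (j : ℤ) - c → legendreSym p ((j : ℤ) - c) = 0 := by
    intro j hj
    rw [legendreSym.eq_zero_iff, ZMod.intCast_zmod_eq_zero_iff_dvd]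
    exact hj
  simp only [Finset.sum_filter]
  rw [excCount_eq p k c, exCard_grouped p hp2 k (c : ZMod p)]
  have hsplit : ∀ m ∈ range (k + 1),
      (k.choose m : ℤ) * ((-1) ^ (k - m) * ∑ j ∈ range (k - m + 1),
        ((k - m).choose j : ℤ) * ((p : ℤ) ^ m + Tval p m ((c : ZMod p) - (j : ℕ))))
      = (k.choose m : ℤ) * ((-1) ^ (k - m) * ((2 : ℤ) ^ (k - m) * (p : ℤ) ^ m))
        + (k.choose m : ℤ) * ((-1) ^ (k - m) * ∑ j ∈ range (k - m + 1),
            ((k - m).choose j : ℤ) * Tval p m ((c : ZMod p) - (j : ℕ))) := by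
    intro m hm
    have hin : ∑ j ∈ range (k - m + 1),
        ((k - m).choose j : ℤ) * ((p : ℤ) ^ m + Tval p m ((c : ZMod p) - (j : ℕ)))
        = (2 : ℤ) ^ (k - m) * (p : ℤ) ^ m + ∑ j ∈ range (k - m + 1),
            ((k - m).choose j : ℤ) * Tval p m ((c : ZMod p) - (j : ℕ)) := by
      rw [Finset.sum_congr rfl (fun j _ => mul_add ((k - m).choose j : ℤ) _ _),
        Finset.sum_add_distrib]
      congr 1
      rw [← Finset.sum_mul]
      congr 1
      rw [← Nat.cast_sum, Nat.sum_range_choose]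
      push_cast
      rfl
    rw [hin]
    ring
  rw [Finset.sum_congr rfl hsplit, Finset.sum_add_distrib]
  have hmain : ∑ m ∈ range (k + 1),
      (k.choose m : ℤ) * ((-1) ^ (k - m) * ((2 : ℤ) ^ (k - m) * (p : ℤ) ^ m))
      = ((p : ℤ) - 2) ^ k := by
    rw [show ((p : ℤ) - 2) = ((p : ℤ) + (-2)) by ring, add_pow]
    refine Finset.sum_congr rfl fun m hm => ?_
    rw [show (-2 : ℤ) = (-1) * 2 by norm_num, mul_pow]
    ring
  rw [hmain]
  rw [sum_range_parity (fun m => (k.choose m : ℤ) * ((-1) ^ (k - m) *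
      ∑ j ∈ range (k - m + 1), ((k - m).choose j : ℤ) *
        Tval p m ((c : ZMod p) - (j : ℕ)))) k]
  rw [show (k + 1) / 2 = (k - 1) / 2 + 1 by omega]
  have heven : ∀ i ∈ range (k / 2 + 1),
      (fun m => (k.choose m : ℤ) * ((-1) ^ (k - m) *
        ∑ j ∈ range (k - m + 1), ((k - m).choose j : ℤ) *
          Tval p m ((c : ZMod p) - (j : ℕ)))) (2 * i)
      = -((-1 : ℤ) ^ k * ((-1 : ℤ) ^ ((p - 1) * i / 2) * (p : ℤ) ^ i *
          (k.choose (2 * i) : ℤ) * ((2 : ℤ) ^ (k - 2 * i) - (p : ℤ) *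
            ∑ j ∈ range (k - 2 * i + 1),
              (if (p : ℤ) ∣ (j : ℤ) - c then ((k - 2 * i).choose j : ℤ) else 0)))) := by
    intro i hi
    rw [Finset.mem_range] at hi
    have h2i : 2 * i ≤ k := by omega
    simp only
    have hTe : ∀ j : ℕ, Tval p (2 * i) ((c : ZMod p) - (j : ℕ))
        = ((if (p : ℤ) ∣ (j : ℤ) - c then (p : ℤ) else 0) - 1) * (p : ℤ) ^ i *
            (χ (-1)) ^ i := by
      intro j
      rw [Tval, if_pos (by omega : (2 * i) % 2 = 0), (by omega : 2 * i / 2 = i)]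
      rw [if_congr (hdelta j) rfl rfl]
    have hS : ∑ j ∈ range (k - 2 * i + 1), ((k - 2 * i).choose j : ℤ) *
        Tval p (2 * i) ((c : ZMod p) - (j : ℕ))
        = ((p : ℤ) ^ i * (χ (-1)) ^ i) * ((p : ℤ) *
            (∑ j ∈ range (k - 2 * i + 1),
              (if (p : ℤ) ∣ (j : ℤ) - c then ((k - 2 * i).choose j : ℤ) else 0))
            - (2 : ℤ) ^ (k - 2 * i)) := by
      have e3 : ∀ j ∈ range (k - 2 * i + 1), ((k - 2 * i).choose j : ℤ) *
          Tval p (2 * i) ((c : ZMod p) - (j : ℕ))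
          = ((p : ℤ) ^ i * (χ (-1)) ^ i) * ((p : ℤ) *
              (if (p : ℤ) ∣ (j : ℤ) - c then ((k - 2 * i).choose j : ℤ) else 0)
              - ((k - 2 * i).choose j : ℤ)) := by
        intro j _
        rw [hTe j]
        split_ifs <;> ring
      rw [Finset.sum_congr rfl e3, ← Finset.mul_sum]
      congr 1
      rw [Finset.sum_sub_distrib, ← Finset.mul_sum]
      congr 1
      rw [← Nat.cast_sum, Nat.sum_range_choose]
      push_cast
      rfl
    rw [hS, hchipow i]
    have hsign : (-1 : ℤ) ^ (k - 2 * i) = (-1 : ℤ) ^ k := by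
      have h4 : (-1 : ℤ) ^ (k - 2 * i) * ((-1 : ℤ) ^ 2) ^ i = (-1 : ℤ) ^ k := by
        rw [← pow_mul, ← pow_add]
        congr 1
        omega
      simpa using h4
    rw [hsign]
    ring
  rw [Finset.sum_congr rfl heven, Finset.sum_neg_distrib, ← Finset.mul_sum]
  have hodd' : ∀ i ∈ range ((k - 1) / 2 + 1),
      (fun m => (k.choose m : ℤ) * ((-1) ^ (k - m) *
        ∑ j ∈ range (k - m + 1), ((k - m).choose j : ℤ) *
          Tval p m ((c : ZMod p) - (j : ℕ)))) (2 * i + 1)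
      = -((-1 : ℤ) ^ k * ((-1 : ℤ) ^ ((p - 1) * (i + 1) / 2) * (p : ℤ) ^ (i + 1) *
          (k.choose (2 * i + 1) : ℤ) *
          ∑ j ∈ range (k - 2 * i - 1 + 1),
            (if ¬ (p : ℤ) ∣ (j : ℤ) - c then
              ((k - 2 * i - 1).choose j : ℤ) * legendreSym p ((j : ℤ) - c) else 0))) := by
    intro i hi
    rw [Finset.mem_range] at hi
    have h2i : 2 * i + 1 ≤ k := by omega
    simp only
    rw [show k - (2 * i + 1) = k - 2 * i - 1 by omega]
    have hTo : ∀ j : ℕ, Tval p (2 * i + 1) ((c : ZMod p) - (j : ℕ))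
        = (p : ℤ) ^ (i + 1) * (χ (-1)) ^ i * χ ((c : ZMod p) - (j : ℕ)) := by
      intro j
      rw [Tval, if_neg (by omega : ¬ (2 * i + 1) % 2 = 0),
        (by omega : (2 * i + 1) / 2 = i)]
    have hS : ∑ j ∈ range (k - 2 * i - 1 + 1), ((k - 2 * i - 1).choose j : ℤ) *
        Tval p (2 * i + 1) ((c : ZMod p) - (j : ℕ))
        = ((p : ℤ) ^ (i + 1) * (χ (-1)) ^ (i + 1)) *
            ∑ j ∈ range (k - 2 * i - 1 + 1),
              (if ¬ (p : ℤ) ∣ (j : ℤ) - c then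
                ((k - 2 * i - 1).choose j : ℤ) * legendreSym p ((j : ℤ) - c) else 0) := by
      have e3 : ∀ j ∈ range (k - 2 * i - 1 + 1), ((k - 2 * i - 1).choose j : ℤ) *
          Tval p (2 * i + 1) ((c : ZMod p) - (j : ℕ))
          = ((p : ℤ) ^ (i + 1) * (χ (-1)) ^ (i + 1)) *
              (if ¬ (p : ℤ) ∣ (j : ℤ) - c then
                ((k - 2 * i - 1).choose j : ℤ) * legendreSym p ((j : ℤ) - c) else 0) := by
        intro j _
        rw [hTo j, hleg j]
        by_cases h : (p : ℤ) ∣ (j : ℤ) - c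
        · rw [if_neg (by exact fun h' => h' h), hlegzero j h]
          ring
        · rw [if_pos h]
          ring
      rw [Finset.sum_congr rfl e3, ← Finset.mul_sum]
    rw [hS, hchipow (i + 1)]
    have hsign : (-1 : ℤ) ^ (k - 2 * i - 1) = -(-1 : ℤ) ^ k := by
      have h4 : (-1 : ℤ) ^ (k - 2 * i - 1) * ((-1 : ℤ) ^ (2 * i + 1)) = (-1 : ℤ) ^ k := by
        rw [← pow_add]
        congr 1
        omega
      have h5 : (-1 : ℤ) ^ (2 * i + 1) = -1 := by
        rw [pow_succ, pow_mul]
        simp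
      rw [h5] at h4
      linarith
    rw [hsign]
    ring
  rw [Finset.sum_congr rfl hodd', Finset.sum_neg_distrib, ← Finset.mul_sum]
  have h2p : (-1 : ℤ) ^ k * (2 - (p : ℤ)) ^ k = ((p : ℤ) - 2) ^ k := by
    rw [← mul_pow, show (-1 : ℤ) * (2 - (p : ℤ)) = (p : ℤ) - 2 by ring]
  linear_combination -h2p
end

section
/- Let p be a prime not dividing an integer e ≥ 1, let k ≥ 2, c and s ≥ 1 be integers, and let (a_1, ..., a_k) be a k-tuple of exceptional units of ℤ_p with a_1^e + ⋯ + a_k^e ≡ c (mod p). Then for every (k−1)-tuple (b_1, ..., b_{k−1}) of elements of ℤ_{p^s} divisible by p, there exists a unique a' ∈ ℤ_{p^s} with a' ≡ a_k (mod p) such that (a_1 + b_1, ..., a_{k−1} + b_{k−1}, a') is a k-tuple of exceptional units of ℤ_{p^s} satisfying (a_1+b_1)^e + ⋯ + (a_{k−1}+b_{k−1})^e + a'^e ≡ c (mod p^s). -/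
lemma aux_isUnit_cast {p s : ℕ} (hp : p.Prime) (hs : s ≠ 0) (x : ZMod (p ^ s)) :
    IsUnit x ↔ IsUnit (ZMod.castHom (dvd_pow_self p hs) (ZMod p) x) := by
  haveI : NeZero p := ⟨hp.pos.ne'⟩
  haveI : NeZero (p ^ s) := ⟨pow_ne_zero s hp.pos.ne'⟩
  constructor
  · exact fun h => h.map _
  · intro h
    have h1 : ZMod.castHom (dvd_pow_self p hs) (ZMod p) x = (x.val : ZMod p) := by
      simp [ZMod.natCast_val]
    rw [h1, ZMod.isUnit_iff_coprime] at h
    have h2 : (x.val : ZMod (p ^ s)) = x := by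
      simp [ZMod.natCast_val, ZMod.cast_id]
    rw [← h2, ZMod.isUnit_iff_coprime]
    exact (Nat.coprime_pow_right_iff (by omega) _ _).mpr h

lemma key_lift (p : ℕ) (hp : p.Prime) (e s : ℕ) (hpe : ¬ p ∣ e) (hs : s ≠ 0)
    (u : ZMod p) (hu : IsUnit u) (t : ZMod (p ^ s))
    (ht : ZMod.castHom (dvd_pow_self p hs) (ZMod p) t = u ^ e) :
    ∃! x : ZMod (p ^ s),
      ZMod.castHom (dvd_pow_self p hs) (ZMod p) x = u ∧ x ^ e = t := by
  haveI : NeZero p := ⟨hp.pos.ne'⟩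
  haveI : NeZero (p ^ s) := ⟨pow_ne_zero s hp.pos.ne'⟩
  set f := ZMod.unitsMap (dvd_pow_self p hs) with hf_def
  have hf : Function.Surjective f := ZMod.unitsMap_surjective _
  have hcard : Nat.card (ZMod (p ^ s))ˣ = Nat.card (ZMod p)ˣ * Nat.card f.ker := by
    rw [← Nat.card_congr (QuotientGroup.quotientKerEquivOfSurjective f hf).toEquiv]
    exact Subgroup.card_eq_card_quotient_mul_card_subgroup f.ker
  have h2 : Nat.card (ZMod (p ^ s))ˣ = p ^ (s - 1) * (p - 1) := by
    rw [Nat.card_eq_fintype_card, ZMod.card_units_eq_totient,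
      Nat.totient_prime_pow hp (by omega)]
  have h3 : Nat.card (ZMod p)ˣ = p - 1 := by
    rw [Nat.card_eq_fintype_card, ZMod.card_units_eq_totient, Nat.totient_prime hp]
  have hK : Nat.card f.ker = p ^ (s - 1) := by
    have hp1 : 0 < p - 1 := by have := hp.two_le; omega
    have h4 : Nat.card (ZMod p)ˣ * Nat.card f.ker = (p - 1) * p ^ (s - 1) := by
      rw [← hcard, h2, mul_comm]
    rw [h3] at h4
    exact Nat.eq_of_mul_eq_mul_left hp1 h4
  have hcop : (Nat.card f.ker).Coprime e := by
    rw [hK]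
    exact Nat.Coprime.pow_left _ (hp.coprime_iff_not_dvd.mpr hpe)
  obtain ⟨x₀, hx₀⟩ := hf hu.unit
  have htu : IsUnit t := by
    rw [aux_isUnit_cast hp hs, ht]; exact hu.pow e
  have hfx : ∀ z : (ZMod (p ^ s))ˣ, (f z : ZMod p)
      = ZMod.castHom (dvd_pow_self p hs) (ZMod p) (z : ZMod (p ^ s)) := by
    intro z; rfl
  have hftu : f htu.unit = hu.unit ^ e := by
    ext
    rw [hfx, htu.unit_spec, ht]
    simp
  set w : (ZMod (p ^ s))ˣ := htu.unit * (x₀ ^ e)⁻¹ with hw_def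
  have hw : w ∈ f.ker := by
    rw [MonoidHom.mem_ker, map_mul, map_inv, map_pow, hx₀, hftu, mul_inv_cancel]
  obtain ⟨v, hv⟩ := (powCoprime hcop).surjective (⟨w, hw⟩ : f.ker)
  have hv' : (v : (ZMod (p ^ s))ˣ) ^ e = w := by
    have := congrArg (Subgroup.subtype f.ker) hv
    simpa [powCoprime] using this
  have hvker : f (v : (ZMod (p ^ s))ˣ) = 1 := MonoidHom.mem_ker.mp v.2
  have hmain1 : f (x₀ * v) = hu.unit := by
    rw [map_mul, hx₀, hvker, mul_one]
  have hmain1' : ZMod.castHom (dvd_pow_self p hs) (ZMod p)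
      ((x₀ * v : (ZMod (p ^ s))ˣ) : ZMod (p ^ s)) = u := by
    rw [← hfx, hmain1, hu.unit_spec]
  have hmainU : (x₀ * v : (ZMod (p ^ s))ˣ) ^ e = htu.unit := by
    rw [mul_pow, hv', hw_def, mul_comm, mul_assoc, inv_mul_cancel, mul_one]
  have hmain2 : ((x₀ * v : (ZMod (p ^ s))ˣ) : ZMod (p ^ s)) ^ e = t := by
    rw [← Units.val_pow_eq_pow_val, hmainU, htu.unit_spec]
  refine ⟨((x₀ * v : (ZMod (p ^ s))ˣ) : ZMod (p ^ s)), ⟨hmain1', hmain2⟩, ?_⟩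
  rintro y ⟨hy1, hy2⟩
  have hyu : IsUnit y := by rw [aux_isUnit_cast hp hs, hy1]; exact hu
  have hye : hyu.unit ^ e = (x₀ * v) ^ e := by
    ext
    rw [Units.val_pow_eq_pow_val, hyu.unit_spec, hy2, ← hmain2, Units.val_pow_eq_pow_val]
  have hfy : f hyu.unit = hu.unit := by
    ext; rw [hfx, hyu.unit_spec, hy1, hu.unit_spec]
  have hz : hyu.unit * (x₀ * v)⁻¹ ∈ f.ker := by
    rw [MonoidHom.mem_ker, map_mul, map_inv, hmain1, hfy, mul_inv_cancel]
  have hze : (⟨hyu.unit * (x₀ * v)⁻¹, hz⟩ : f.ker) ^ e = 1 := by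
    have h5 : (hyu.unit * (x₀ * v)⁻¹) ^ e = 1 := by
      rw [mul_pow, inv_pow, hye, mul_inv_cancel]
    exact Subtype.ext (by simpa using h5)
  have h6 : (⟨hyu.unit * (x₀ * v)⁻¹, hz⟩ : f.ker) = 1 := by
    have := (powCoprime hcop).injective
      (a₁ := ⟨hyu.unit * (x₀ * v)⁻¹, hz⟩) (a₂ := 1)
    simp only [powCoprime, Equiv.coe_fn_mk, one_pow] at this
    exact this hze
  have h7 : hyu.unit = x₀ * v := by
    have := congrArg (Subgroup.subtype f.ker) h6
    simp only [Subgroup.coe_subtype, OneMemClass.coe_one] at this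
    exact mul_inv_eq_one.mp this
  rw [← hyu.unit_spec, h7]

/-- Hensel-type lifting of exceptional-unit solutions of
`x₁^e + ⋯ + x_k^e ≡ c (mod p)` to solutions modulo `p^s`: the entries
`a i` of the solution modulo `p` are regarded as integers in `{0, ..., p-1}`
(via `ZMod.val`) and then reduced modulo `p^s`. -/
theorem hensel_lift_exceptional (p : ℕ) (hp : p.Prime) (e : ℕ) (he : 1 ≤ e)
    (hpe : ¬ p ∣ e) (k : ℕ) (hk : 2 ≤ k) (c : ℤ) (s : ℕ) (hs : 1 ≤ s)
    (a : Fin k → ZMod p)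
    (ha : ∀ i, IsUnit (a i) ∧ IsUnit (1 - a i))
    (hsum : ∑ i, (a i) ^ e = (c : ZMod p))
    (b : Fin (k - 1) → ZMod (p ^ s))
    (hb : ∀ i, (p : ZMod (p ^ s)) ∣ b i) :
    ∃! a' : ZMod (p ^ s),
      ZMod.castHom (dvd_pow_self p (by omega : s ≠ 0)) (ZMod p) a' = a ⟨k - 1, by omega⟩ ∧
      (∀ i : Fin (k - 1),
        IsUnit (((a (Fin.castLE (by omega) i)).val : ZMod (p ^ s)) + b i) ∧
        IsUnit (1 - (((a (Fin.castLE (by omega) i)).val : ZMod (p ^ s)) + b i))) ∧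
      IsUnit a' ∧ IsUnit (1 - a') ∧
      (∑ i : Fin (k - 1), (((a (Fin.castLE (by omega) i)).val : ZMod (p ^ s)) + b i) ^ e)
        + a' ^ e = (c : ZMod (p ^ s)) := by
  haveI : NeZero p := ⟨hp.pos.ne'⟩
  haveI : NeZero (p ^ s) := ⟨pow_ne_zero s hp.pos.ne'⟩
  have hs' : s ≠ 0 := by omega
  obtain ⟨m, rfl⟩ : ∃ m, k = m + 1 := ⟨k - 1, by omega⟩
  set φ := ZMod.castHom (dvd_pow_self p hs') (ZMod p) with hφ_def
  have hcastval : ∀ j : Fin (m + 1), φ (((a j).val : ZMod (p ^ s))) = a j := by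
    intro j
    simp [hφ_def, map_natCast, ZMod.natCast_val, ZMod.cast_id]
  have hcastb : ∀ i, φ (b i) = 0 := by
    intro i
    obtain ⟨x, hx⟩ := hb i
    rw [hx, map_mul, map_natCast, ZMod.natCast_self, zero_mul]
  have hcastcomp : ∀ i : Fin (m + 1 - 1),
      φ (((a (Fin.castLE (by omega) i)).val : ZMod (p ^ s)) + b i)
        = a (Fin.castLE (by omega) i) := by
    intro i
    rw [map_add, hcastval, hcastb, add_zero]
  have hcompunits : ∀ i : Fin (m + 1 - 1),
      IsUnit (((a (Fin.castLE (by omega) i)).val : ZMod (p ^ s)) + b i) ∧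
      IsUnit (1 - (((a (Fin.castLE (by omega) i)).val : ZMod (p ^ s)) + b i)) := by
    intro i
    constructor
    · rw [aux_isUnit_cast hp hs', hcastcomp]
      exact (ha _).1
    · rw [aux_isUnit_cast hp hs', map_sub, map_one, hcastcomp]
      exact (ha _).2
  set t : ZMod (p ^ s) :=
    (c : ZMod (p ^ s))
      - ∑ i : Fin (m + 1 - 1), (((a (Fin.castLE (by omega) i)).val : ZMod (p ^ s)) + b i) ^ e
    with ht_def
  have hlast : (⟨m + 1 - 1, by omega⟩ : Fin (m + 1)) = Fin.last m := rfl
  have ht : φ t = a ⟨m + 1 - 1, by omega⟩ ^ e := by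
    rw [ht_def, map_sub, map_intCast, map_sum]
    have hsum' : ∑ i : Fin (m + 1 - 1),
        φ ((((a (Fin.castLE (by omega) i)).val : ZMod (p ^ s)) + b i) ^ e)
        = ∑ i : Fin m, a (Fin.castSucc i) ^ e := by
      apply Finset.sum_congr rfl
      intro i _
      rw [map_pow, hcastcomp]
      rfl
    rw [hsum', ← hsum, Fin.sum_univ_castSucc, hlast]
    ring
  obtain ⟨x, ⟨hx1, hx2⟩, hxu⟩ :=
    key_lift p hp e s hpe hs' (a ⟨m + 1 - 1, by omega⟩) (ha _).1 t ht
  refine ⟨x, ⟨hx1, hcompunits, ?_, ?_, ?_⟩, ?_⟩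
  · exact (aux_isUnit_cast hp hs' x).mpr (by rw [hx1]; exact (ha _).1)
  · refine (aux_isUnit_cast hp hs' _).mpr ?_
    rw [map_sub, map_one]
    show IsUnit (1 - φ x)
    rw [hx1]
    exact (ha _).2
  · rw [hx2, ht_def]; ring
  · rintro y ⟨hy1, -, -, -, hy5⟩
    exact hxu y ⟨hy1, eq_sub_of_add_eq' hy5⟩
end
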